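/- arXiv:2205.13436 — 7 statements merged into one kernel-verified Lean document; each statement's English description precedes it below -/
import Mathlib

section
/- Let A = ∑_{i≥0} A_i u^i ∈ M_n(ℂ[[u]]) and suppose the standard basis of ℂ^n is adapted to the generalized eigenspace decomposition of the residue A_0, i.e. each generalized eigenspace Ẽ_w of A_0 is spanned by a subset of the standard basis vectors. Then there exists P ∈ GL_n(ℂ[[u]]) with constant term P(0) = Id such that the matrix Ã = P^{-1}AP + u²P^{-1}(dP/du) = ∑_{i≥0} Ã_i u^i (which satisfies u²(d/du) + Ã = P^{-1}∘(u²(d/du) + A)∘P as operators on ℂ[[u]]^n) has the following properties: (i) every coefficient Ã_i preserves the generalized eigenspace decomposition, i.e. Ã_i(Ẽ_w) ⊆ Ẽ_w for all i and all eigenvalues w; and (ii) for every eigenvalue w, π_w ∘ Ã_1|_{Ẽ_w} = π_w ∘ A_1|_{Ẽ_w}, where π_w : ℂ^n → Ẽ_w is the projection along the other generalized eigenspaces (the diagonal blocks of Ã_1 and A_1 agree). -/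
/-!
First step of the Hukuhara–Levelt–Turrittin procedure (Lemma "decomposition lemma"):
if the standard basis of `ℂ^n` is adapted to the generalized eigenspace decomposition of
the residue `A_0`, then there is a gauge transformation `P ∈ GL_n(ℂ[[u]])` with
`P(0) = Id` such that every coefficient of `Ã = P⁻¹AP + u²P⁻¹(dP/du)` preserves the
generalized eigenspaces of `A_0`, and the diagonal blocks of `Ã_1` and `A_1` agree.
-/

open PowerSeries Matrix

noncomputable section

/-- Formal derivative of a power series in `ℂ[[u]]`. -/
def psD (f : PowerSeries ℂ) : PowerSeries ℂ :=
  PowerSeries.mk fun k => ((k : ℂ) + 1) * PowerSeries.coeff (k + 1) f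

/-- Entrywise formal derivative of a matrix of power series. -/
def matD {I J : Type*} (M : Matrix I J (PowerSeries ℂ)) : Matrix I J (PowerSeries ℂ) :=
  Matrix.of fun i j => psD (M i j)

/-- The `k`-th coefficient matrix of a matrix of power series. -/
def coeffM {I J : Type*} (k : ℕ) (M : Matrix I J (PowerSeries ℂ)) : Matrix I J ℂ :=
  Matrix.of fun i j => PowerSeries.coeff k (M i j)

namespace BDaux

variable {n : ℕ}

abbrev Mat (n : ℕ) := Matrix (Fin n) (Fin n) ℂ

/-- off-block-diagonal part w.r.t. the grouping `d`. -/
def od (d : Fin n → ℂ) (M : Mat n) : Mat n :=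
  Matrix.of fun i j => if d i = d j then 0 else M i j

/-- the matrix `R_{k+1}` of the recursion, given the previous values. -/
def Rmat (Ac : ℕ → Mat n) (prev : ℕ → Mat n × Mat n) (k : ℕ) : Mat n :=
  (∑ j ∈ Finset.range (k+1), Ac (j+1) * (prev (k-j)).1)
    - (∑ j ∈ Finset.range k, (prev (j+1)).1 * (prev (k-j)).2) + (k : ℂ) • (prev k).1

def Fstep (Ac : ℕ → Mat n) (d : Fin n → ℂ) (pick : Mat n → Mat n)
    (prev : ℕ → Mat n × Mat n) (k : ℕ) : Mat n × Mat n :=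
  (pick (Rmat Ac prev k), Rmat Ac prev k - od d (Rmat Ac prev k))

def gseq (Ac : ℕ → Mat n) (d : Fin n → ℂ) (pick : Mat n → Mat n) : ℕ → ℕ → Mat n × Mat n
  | 0 => fun _ => (1, Ac 0)
  | (k+1) => fun m =>
      if m = k+1 then Fstep Ac d pick (gseq Ac d pick k) k else gseq Ac d pick k m

def fseq (Ac : ℕ → Mat n) (d : Fin n → ℂ) (pick : Mat n → Mat n) (m : ℕ) : Mat n × Mat n :=
  gseq Ac d pick m m

variable {Ac : ℕ → Mat n} {d : Fin n → ℂ} {pick : Mat n → Mat n}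

lemma Rmat_congr {p q : ℕ → Mat n × Mat n} (k : ℕ) (h : ∀ m ≤ k, p m = q m) :
    Rmat Ac p k = Rmat Ac q k := by
  unfold Rmat
  have h1 : (∑ j ∈ Finset.range (k+1), Ac (j+1) * (p (k-j)).1)
      = ∑ j ∈ Finset.range (k+1), Ac (j+1) * (q (k-j)).1 :=
    Finset.sum_congr rfl fun j _ => by rw [h (k-j) (Nat.sub_le _ _)]
  have h2 : (∑ j ∈ Finset.range k, (p (j+1)).1 * (p (k-j)).2)
      = ∑ j ∈ Finset.range k, (q (j+1)).1 * (q (k-j)).2 :=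
    Finset.sum_congr rfl fun j hj => by
      rw [h (j+1) (Finset.mem_range.mp hj), h (k-j) (Nat.sub_le _ _)]
  rw [h1, h2, h k le_rfl]

lemma Fstep_congr {p q : ℕ → Mat n × Mat n} (k : ℕ) (h : ∀ m ≤ k, p m = q m) :
    Fstep Ac d pick p k = Fstep Ac d pick q k := by
  unfold Fstep; rw [Rmat_congr k h]

lemma gseq_le : ∀ k m, m ≤ k → gseq Ac d pick k m = fseq Ac d pick m := by
  intro k
  induction k with
  | zero => intro m hm; interval_cases m; rfl
  | succ k ih =>
    intro m hm
    rcases Nat.lt_succ_iff_lt_or_eq.mp (Nat.lt_succ_of_le hm) with h | rfl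
    · have hm' : m ≤ k := Nat.lt_succ_iff.mp h
      show (if m = k+1 then _ else gseq Ac d pick k m) = _
      rw [if_neg (by omega), ih m hm']
    · rfl

lemma fseq_zero : fseq Ac d pick 0 = (1, Ac 0) := rfl

lemma fseq_succ (k : ℕ) :
    fseq Ac d pick (k+1) = Fstep Ac d pick (fseq Ac d pick) k := by
  show (if k+1 = k+1 then Fstep Ac d pick (gseq Ac d pick k) k else _) = _
  rw [if_pos rfl]
  exact Fstep_congr k (fun m hm => gseq_le k m hm)

/-- span of standard basis vectors indexed by `S`. -/
lemma mem_span_single {S : Set (Fin n)} {x : Fin n → ℂ} :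
    x ∈ Submodule.span ℂ ((fun i : Fin n => (Pi.single i 1 : Fin n → ℂ)) '' S) ↔
      ∀ i ∉ S, x i = 0 := by
  have hsub : ((fun i : Fin n => (Pi.single i 1 : Fin n → ℂ)) '' S) ⊆
      {x : Fin n → ℂ | ∀ i ∉ S, x i = 0} := by
    rintro _ ⟨j, hj, rfl⟩ i hi
    exact Pi.single_eq_of_ne (fun h : i = j => hi (by rw [h]; exact hj)) 1
  constructor
  · let W : Submodule ℂ (Fin n → ℂ) :=
      { carrier := {x | ∀ i ∉ S, x i = 0}
        add_mem' := fun {a b} ha hb i hi => by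
          simp only [Pi.add_apply, ha i hi, hb i hi, add_zero]
        zero_mem' := fun i _ => rfl
        smul_mem' := fun c a ha i hi => by
          simp only [Pi.smul_apply, ha i hi, smul_zero] }
    intro hx
    have : x ∈ W := Submodule.span_le.mpr hsub hx
    exact this
  · intro hx
    have hxs : x = ∑ i : Fin n, Pi.single i (x i) := (Finset.univ_sum_single x).symm
    rw [hxs]
    refine Submodule.sum_mem _ fun i _ => ?_
    by_cases hi : i ∈ S
    · have : Pi.single i (x i) = x i • (Pi.single i 1 : Fin n → ℂ) := by
        rw [← Pi.single_smul, smul_eq_mul, mul_one]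
      rw [this]
      exact Submodule.smul_mem _ _ (Submodule.subset_span ⟨i, hi, rfl⟩)
    · rw [hx i hi]
      simp


lemma eq_of_coeffM {M N : Matrix (Fin n) (Fin n) (PowerSeries ℂ)}
    (h : ∀ k, coeffM k M = coeffM k N) : M = N := by
  ext i j k
  exact Matrix.ext_iff.mpr (h k) i j

lemma coeffM_mul (M N : Matrix (Fin n) (Fin n) (PowerSeries ℂ)) (k : ℕ) :
    coeffM k (M * N) = ∑ p ∈ Finset.HasAntidiagonal.antidiagonal k, coeffM p.1 M * coeffM p.2 N := by
  ext i j
  simp only [coeffM, Matrix.of_apply, Matrix.mul_apply, map_sum, PowerSeries.coeff_mul,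
    Matrix.sum_apply]
  rw [Finset.sum_comm]

lemma coeffM_add (M N : Matrix (Fin n) (Fin n) (PowerSeries ℂ)) (k : ℕ) :
    coeffM k (M + N) = coeffM k M + coeffM k N := by
  ext i j
  simp [coeffM]

/-- the matrix of power series with prescribed coefficients -/
def PS (g : ℕ → Mat n) : Matrix (Fin n) (Fin n) (PowerSeries ℂ) :=
  Matrix.of fun i j => PowerSeries.mk fun k => g k i j

lemma coeffM_PS (g : ℕ → Mat n) (k : ℕ) : coeffM k (PS g) = g k := by
  ext i j
  simp [coeffM, PS]

lemma coeffM_X2_zero (M : Matrix (Fin n) (Fin n) (PowerSeries ℂ)) :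
    coeffM 0 ((PowerSeries.X ^ 2 : PowerSeries ℂ) • matD M) = 0 := by
  ext i j
  simp only [coeffM, Matrix.of_apply, Matrix.smul_apply, smul_eq_mul, Matrix.zero_apply]
  rw [PowerSeries.coeff_X_pow_mul']
  simp

lemma coeffM_X2_succ (M : Matrix (Fin n) (Fin n) (PowerSeries ℂ)) (k : ℕ) :
    coeffM (k+1) ((PowerSeries.X ^ 2 : PowerSeries ℂ) • matD M) = (k : ℂ) • coeffM k M := by
  ext i j
  simp only [coeffM, Matrix.of_apply, Matrix.smul_apply, smul_eq_mul]
  cases k with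
  | zero =>
    rw [PowerSeries.coeff_X_pow_mul']
    simp
  | succ m =>
    rw [show m + 1 + 1 = m + 2 from rfl, PowerSeries.coeff_X_pow_mul]
    simp only [matD, Matrix.of_apply, psD, PowerSeries.coeff_mk]
    push_cast
    ring

end BDaux

theorem block_diagonalisation (n : ℕ) (A : Matrix (Fin n) (Fin n) (PowerSeries ℂ))
    -- the standard basis is adapted to the generalized eigenspace decomposition of the
    -- residue `A_0`: each generalized eigenspace is spanned by standard basis vectors
    (d : Fin n → ℂ)
    (hd : ∀ w : ℂ, Module.End.maxGenEigenspace (Matrix.mulVecLin (coeffM 0 A)) w =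
      Submodule.span ℂ ((fun i : Fin n => (Pi.single i 1 : Fin n → ℂ)) '' {i | d i = w})) :
    ∃ P Atil : Matrix (Fin n) (Fin n) (PowerSeries ℂ),
      IsUnit P ∧ coeffM 0 P = 1 ∧
      -- `Ã = P⁻¹AP + u²P⁻¹(dP/du)`, equivalently `P·Ã = A·P + u²·(dP/du)`,
      -- i.e. `u²(d/du) + Ã = P⁻¹ ∘ (u²(d/du) + A) ∘ P`
      P * Atil = A * P + (PowerSeries.X ^ 2 : PowerSeries ℂ) • matD P ∧
      -- (i) every coefficient `Ã_i` preserves the generalized eigenspace decomposition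
      (∀ i : ℕ, ∀ w : ℂ,
        ∀ x ∈ Module.End.maxGenEigenspace (Matrix.mulVecLin (coeffM 0 A)) w,
          (coeffM i Atil).mulVec x ∈
            Module.End.maxGenEigenspace (Matrix.mulVecLin (coeffM 0 A)) w) ∧
      -- (ii) the diagonal blocks of `Ã_1` and `A_1` agree:
      -- for `x ∈ Ẽ_w`, the difference `Ã_1 x − A_1 x` has vanishing component in `Ẽ_w`,
      -- i.e. it lies in the sum of the other generalized eigenspaces
      (∀ w : ℂ, ∀ x ∈ Module.End.maxGenEigenspace (Matrix.mulVecLin (coeffM 0 A)) w,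
        (coeffM 1 Atil).mulVec x - (coeffM 1 A).mulVec x ∈
          ⨆ w' : ℂ, ⨆ _ : w' ≠ w,
            Module.End.maxGenEigenspace (Matrix.mulVecLin (coeffM 0 A)) w') := by
  classical
  have memE : ∀ (w : ℂ) (x : Fin n → ℂ),
      x ∈ Module.End.maxGenEigenspace (Matrix.mulVecLin (coeffM 0 A)) w ↔
        ∀ i, d i ≠ w → x i = 0 := by
    intro w x
    rw [hd w, BDaux.mem_span_single]
    constructor
    · exact fun h i hi => h i hi
    · exact fun h i hi => h i hi
  have singleMem : ∀ j : Fin n, (Pi.single j 1 : Fin n → ℂ) ∈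
      Module.End.maxGenEigenspace (Matrix.mulVecLin (coeffM 0 A)) (d j) := by
    intro j
    exact (memE _ _).2 fun i hi =>
      Pi.single_eq_of_ne (fun h : i = j => hi (by rw [h])) 1
  have hA0blk : ∀ i j, d i ≠ d j → coeffM 0 A i j = 0 := by
    intro i j hij
    have h1 : (Matrix.mulVecLin (coeffM 0 A)) (Pi.single j 1) ∈
        Module.End.maxGenEigenspace (Matrix.mulVecLin (coeffM 0 A)) (d j) :=
      Module.End.mapsTo_maxGenEigenspace_of_comm (Commute.refl _) (d j) (singleMem j)
    have h2 := (memE _ _).1 h1 i hij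
    simpa [Matrix.mulVecLin_apply, Matrix.mulVec_single] using h2
  have blkdiag_preserves : ∀ (M : BDaux.Mat n), (∀ i j, d i ≠ d j → M i j = 0) →
      ∀ (w : ℂ) (x : Fin n → ℂ),
        x ∈ Module.End.maxGenEigenspace (Matrix.mulVecLin (coeffM 0 A)) w →
        M.mulVec x ∈ Module.End.maxGenEigenspace (Matrix.mulVecLin (coeffM 0 A)) w := by
    intro M hM w x hx
    refine (memE _ _).2 fun i hi => ?_
    have hx' := (memE _ _).1 hx
    show (∑ j, M i j * x j) = 0
    refine Finset.sum_eq_zero fun j _ => ?_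
    by_cases hj : d j = w
    · rw [hM i j (by rw [hj]; exact hi), zero_mul]
    · rw [hx' j hj, mul_zero]
  have mem_sup : ∀ (w : ℂ) (v : Fin n → ℂ), (∀ i, d i = w → v i = 0) →
      v ∈ ⨆ w' : ℂ, ⨆ _ : w' ≠ w,
        Module.End.maxGenEigenspace (Matrix.mulVecLin (coeffM 0 A)) w' := by
    intro w v hv
    rw [← Finset.univ_sum_single v]
    refine Submodule.sum_mem _ fun i _ => ?_
    by_cases hi : d i = w
    · rw [hv i hi]
      simp
    · refine Submodule.mem_iSup_of_mem (d i) (Submodule.mem_iSup_of_mem hi ?_)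
      exact (memE _ _).2 fun j hj =>
        Pi.single_eq_of_ne (fun h : j = i => hj (by rw [h])) _
  -- the Sylvester-type solving step
  let Δ : Submodule ℂ (BDaux.Mat n) :=
    { carrier := {M | ∀ i j, d i = d j → M i j = 0}
      add_mem' := fun {a b} ha hb i j hij => by
        simp only [Matrix.add_apply, ha i j hij, hb i j hij, add_zero]
      zero_mem' := fun i j _ => rfl
      smul_mem' := fun c a ha i j hij => by
        simp only [Matrix.smul_apply, ha i j hij, smul_zero] }
  let φ : BDaux.Mat n →ₗ[ℂ] BDaux.Mat n :=
    LinearMap.mulLeft ℂ (coeffM 0 A) - LinearMap.mulRight ℂ (coeffM 0 A)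
  have hφ : ∀ M, φ M = coeffM 0 A * M - M * coeffM 0 A := fun M => rfl
  have hmapsΔ : ∀ M ∈ Δ, φ M ∈ Δ := by
    intro M hM
    have hM' : ∀ i j, d i = d j → M i j = 0 := hM
    show ∀ i j, d i = d j → φ M i j = 0
    intro i j hij
    have e1 : (coeffM 0 A * M) i j = 0 := by
      rw [Matrix.mul_apply]
      refine Finset.sum_eq_zero fun l _ => ?_
      by_cases hl : d l = d j
      · rw [hM' l j hl, mul_zero]
      · rw [hA0blk i l (fun h => hl (by rw [← h]; exact hij)), zero_mul]
    have e2 : (M * coeffM 0 A) i j = 0 := by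
      rw [Matrix.mul_apply]
      refine Finset.sum_eq_zero fun l _ => ?_
      by_cases hl : d i = d l
      · rw [hM' i l hl, zero_mul]
      · rw [hA0blk l j (fun h => hl (by rw [hij, ← h])), mul_zero]
    rw [hφ, Matrix.sub_apply, e1, e2, sub_zero]
  let Φ : Δ →ₗ[ℂ] Δ := φ.restrict hmapsΔ
  have hinj : Function.Injective Φ := by
    rw [injective_iff_map_eq_zero]
    intro x hx0
    have hval : φ (x : BDaux.Mat n) = 0 := by
      have := congrArg (Subtype.val) hx0
      simpa [Φ, LinearMap.restrict_apply] using this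
    have hcomm : coeffM 0 A * (x : BDaux.Mat n) = (x : BDaux.Mat n) * coeffM 0 A :=
      sub_eq_zero.mp (by rw [← hφ]; exact hval)
    have hC : Commute (Matrix.mulVecLin (coeffM 0 A))
        (Matrix.mulVecLin (x : BDaux.Mat n)) := by
      show _ * _ = _ * _
      rw [Module.End.mul_eq_comp, Module.End.mul_eq_comp, ← Matrix.mulVecLin_mul,
        ← Matrix.mulVecLin_mul, hcomm]
    have hx' : ∀ i j, (x : BDaux.Mat n) i j = 0 := by
      intro i j
      by_cases hij : d i = d j
      · exact x.2 i j hij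
      · have h1 := Module.End.mapsTo_maxGenEigenspace_of_comm hC (d j) (singleMem j)
        have h2 := (memE _ _).1 h1 i hij
        simpa [Matrix.mulVecLin_apply, Matrix.mulVec_single] using h2
    exact Subtype.ext (by ext i j; simpa using hx' i j)
  have hsurj : Function.Surjective Φ := LinearMap.injective_iff_surjective.mp hinj
  have exists_pick : ∀ R : BDaux.Mat n, ∃ Pm : BDaux.Mat n,
      (∀ i j, d i = d j → Pm i j = 0) ∧
      coeffM 0 A * Pm - Pm * coeffM 0 A = -(BDaux.od d R) := by
    intro R
    have hmem : -(BDaux.od d R) ∈ Δ := by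
      refine Submodule.neg_mem _ ?_
      show ∀ i j, d i = d j → BDaux.od d R i j = 0
      intro i j hij
      simp [BDaux.od, hij]
    obtain ⟨Pd, hPd⟩ := hsurj ⟨-(BDaux.od d R), hmem⟩
    refine ⟨(Pd : BDaux.Mat n), Pd.2, ?_⟩
    have := congrArg Subtype.val hPd
    simpa [Φ, LinearMap.restrict_apply, hφ] using this
  choose pick hpick1 hpick2 using exists_pick
  -- the recursive sequence
  set f : ℕ → BDaux.Mat n × BDaux.Mat n := BDaux.fseq (fun k => coeffM k A) d pick with hf
  have hf01 : (f 0).1 = 1 := by rw [hf]; rfl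
  have hf02 : (f 0).2 = coeffM 0 A := by rw [hf]; rfl
  have hfs : ∀ k, f (k+1) = BDaux.Fstep (fun k => coeffM k A) d pick f k := by
    intro k
    rw [hf]
    exact BDaux.fseq_succ k
  set P := BDaux.PS (fun k => (f k).1) with hP
  set Atil := BDaux.PS (fun k => (f k).2) with hAtil
  have hcP : ∀ k, coeffM k P = (f k).1 := fun k => by rw [hP]; exact BDaux.coeffM_PS _ k
  have hcA : ∀ k, coeffM k Atil = (f k).2 := fun k => by rw [hAtil]; exact BDaux.coeffM_PS _ k
  have hblk : ∀ k i j, d i ≠ d j → (f k).2 i j = 0 := by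
    intro k
    cases k with
    | zero => intro i j hij; rw [hf02]; exact hA0blk i j hij
    | succ m =>
      intro i j hij
      have h2 : (f (m+1)).2 = BDaux.Rmat (fun k => coeffM k A) f m
          - BDaux.od d (BDaux.Rmat (fun k => coeffM k A) f m) := by rw [hfs m]; rfl
      rw [h2, Matrix.sub_apply,
        show BDaux.od d (BDaux.Rmat (fun k => coeffM k A) f m) i j
          = BDaux.Rmat (fun k => coeffM k A) f m i j from if_neg hij]
      exact sub_self _
  have keyEq : P * Atil = A * P + (PowerSeries.X ^ 2 : PowerSeries ℂ) • matD P := by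
    apply BDaux.eq_of_coeffM
    intro k
    rw [BDaux.coeffM_mul, BDaux.coeffM_add, BDaux.coeffM_mul,
      Finset.Nat.sum_antidiagonal_eq_sum_range_succ_mk,
      Finset.Nat.sum_antidiagonal_eq_sum_range_succ_mk]
    simp only [hcP, hcA]
    cases k with
    | zero =>
      rw [BDaux.coeffM_X2_zero]
      simp [hf01, hf02]
    | succ k =>
      rw [BDaux.coeffM_X2_succ, hcP]
      set Rm := BDaux.Rmat (fun k => coeffM k A) f k with hRm
      have hP1 : (f (k+1)).1 = pick Rm := by rw [hfs k]; rfl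
      have hP2 : (f (k+1)).2 = Rm - BDaux.od d Rm := by rw [hfs k]; rfl
      have hPA : pick Rm * coeffM 0 A = coeffM 0 A * pick Rm + BDaux.od d Rm := by
        have h := hpick2 Rm
        rw [sub_eq_iff_eq_add] at h
        rw [h]
        abel
      rw [Finset.sum_range_succ', Finset.sum_range_succ, Finset.sum_range_succ']
      simp only [Nat.add_sub_add_right, Nat.sub_self, Nat.sub_zero, hf01, hf02, hP1, hP2]
      rw [one_mul, hPA]
      have hRe : Rm = (∑ j ∈ Finset.range (k+1), coeffM (j+1) A * (f (k-j)).1)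
          - (∑ j ∈ Finset.range k, (f (j+1)).1 * (f (k-j)).2) + (k : ℂ) • (f k).1 := by
        rw [hRm]; rfl
      rw [hRe]
      abel
  refine ⟨P, Atil, ?_, ?_, keyEq, ?_, ?_⟩
  · rw [Matrix.isUnit_iff_isUnit_det, PowerSeries.isUnit_iff_constantCoeff]
    have h1 : (PowerSeries.constantCoeff (R := ℂ)).mapMatrix P = 1 := by
      ext i j
      rw [RingHom.mapMatrix_apply]
      show PowerSeries.constantCoeff (P i j) = (1 : BDaux.Mat n) i j
      rw [← PowerSeries.coeff_zero_eq_constantCoeff_apply,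
        show (PowerSeries.coeff 0) (P i j) = coeffM 0 P i j from rfl,
        Matrix.ext_iff.mpr (hcP 0) i j, Matrix.ext_iff.mpr hf01 i j]
    rw [RingHom.map_det, h1, Matrix.det_one]
    exact isUnit_one
  · rw [hcP 0, hf01]
  · intro i w x hx
    rw [hcA i]
    exact blkdiag_preserves _ (hblk i) w x hx
  · intro w x hx
    have hR0 : BDaux.Rmat (fun k => coeffM k A) f 0 = coeffM 1 A := by
      simp [BDaux.Rmat, hf01]
    have h12 : (f 1).2 = coeffM 1 A - BDaux.od d (coeffM 1 A) := by
      rw [hfs 0]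
      show BDaux.Rmat (fun k => coeffM k A) f 0
        - BDaux.od d (BDaux.Rmat (fun k => coeffM k A) f 0) = _
      rw [hR0]
    rw [hcA 1, h12, Matrix.sub_mulVec]
    rw [show (coeffM 1 A).mulVec x - (BDaux.od d (coeffM 1 A)).mulVec x
        - (coeffM 1 A).mulVec x = -((BDaux.od d (coeffM 1 A)).mulVec x) from by abel]
    refine Submodule.neg_mem _ (mem_sup w _ ?_)
    intro i hi
    show (∑ j, BDaux.od d (coeffM 1 A) i j * x j) = 0
    refine Finset.sum_eq_zero fun j _ => ?_
    by_cases hj : d j = w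
    · rw [show BDaux.od d (coeffM 1 A) i j = 0 from if_pos (by rw [hi, hj]), zero_mul]
    · rw [(memE w x).1 hx j hj, mul_zero]


end
end

section
/- Let A ∈ M_n(ℂ[[u]]), A′ ∈ M_m(ℂ[[u]]), and let F ∈ M_{m×n}(ℂ[[u]]) satisfy u²·(dF/du) = F·A − A′·F (i.e. F defines a morphism of E-structures from (ℂ[[u]]^n, A) to (ℂ[[u]]^m, A′)). Let (E_w) and (E′_w) be the unique eigenvalue decompositions of ℂ[[u]]^n and ℂ[[u]]^m respectively, i.e. the unique families of ℂ[[u]]-submodules that are direct sum decompositions, are invariant under D_A (resp. D_{A′}), and reduce modulo u to the generalized eigenspaces of the residues A_0 (resp. A′_0). Then F·E_w ⊆ E′_w for every w, where E′_w := 0 if w is not an eigenvalue of A′_0. (Morphisms of E-structures respect the eigenvalue decompositions.) -/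
/-!
Morphisms of E-structures respect the eigenvalue (Hukuhara–Levelt–Turrittin)
decompositions: if `F` satisfies `u²·dF/du = F·A − A′·F`, and `(E_w)`, `(E′_w)` are the
eigenvalue decompositions of `(ℂ[[u]]^n, A)` and `(ℂ[[u]]^m, A′)` (with `E_w = 0`,
resp. `E′_w = 0`, when `w` is not an eigenvalue of the corresponding residue), then
`F·E_w ⊆ E′_w` for every `w`.
-/

open PowerSeries Matrix

noncomputable section

/-- Reduction modulo `u` of a vector of power series (constant coefficients). -/
def piConst {n : ℕ} (v : Fin n → PowerSeries ℂ) : Fin n → ℂ :=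
  fun i => PowerSeries.constantCoeff (v i)

/-- The operator `D_A(v) = u² · dv/du + A · v` of the E-structure attached to `A`. -/
def DA {n : ℕ} (A : Matrix (Fin n) (Fin n) (PowerSeries ℂ)) (v : Fin n → PowerSeries ℂ) :
    Fin n → PowerSeries ℂ :=
  fun i => PowerSeries.X ^ 2 * psD (v i) + A.mulVec v i

/-- The eigenvalue decomposition of the E-structure `(ℂ[[u]]^n, D_A)`, written as a
family of `ℂ[[u]]`-submodules indexed by all of `ℂ` and vanishing away from the
eigenvalues of the residue `A_0`:
(o) `E_w = 0` if `w` is not an eigenvalue of `A_0`;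
(i) `ℂ[[u]]^n = ⊕_w E_w`;
(ii) `D_A(E_w) ⊆ E_w`;
(iii) `π(E_w)` is the generalized eigenspace of `A_0` for `w`. -/
def IsEigenDecomp {n : ℕ} (A : Matrix (Fin n) (Fin n) (PowerSeries ℂ))
    (E : ℂ → Submodule (PowerSeries ℂ) (Fin n → PowerSeries ℂ)) : Prop :=
  (∀ w : ℂ, ¬ Module.End.HasEigenvalue (Matrix.mulVecLin (coeffM 0 A)) w → E w = ⊥) ∧
  DirectSum.IsInternal E ∧
  (∀ w, ∀ v ∈ E w, DA A v ∈ E w) ∧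
  (∀ w : ℂ, piConst '' (E w : Set (Fin n → PowerSeries ℂ)) =
    (Module.End.maxGenEigenspace (Matrix.mulVecLin (coeffM 0 A)) w : Set (Fin n → ℂ)))

-- ### aux lemmas

lemma psD_eq (f : PowerSeries ℂ) : psD f = PowerSeries.derivativeFun f := by
  ext k
  show _ = PowerSeries.coeff k (PowerSeries.derivative ℂ f)
  simp [psD, PowerSeries.coeff_derivativeFun, mul_comm]

lemma psD_add (f g : PowerSeries ℂ) : psD (f + g) = psD f + psD g := by
  simp [psD_eq, PowerSeries.derivativeFun_add]

lemma psD_zero : psD (0 : PowerSeries ℂ) = 0 := by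
  ext k; simp [psD]

lemma psD_mul (f g : PowerSeries ℂ) : psD (f * g) = psD f * g + f * psD g := by
  rw [psD_eq, psD_eq, psD_eq, PowerSeries.derivativeFun_mul, smul_eq_mul, smul_eq_mul]
  ring

lemma psD_sum {ι : Type*} (s : Finset ι) (f : ι → PowerSeries ℂ) :
    psD (∑ i ∈ s, f i) = ∑ i ∈ s, psD (f i) := by
  classical
  induction s using Finset.induction with
  | empty => simp [psD_zero]
  | insert _ _ h ih => rw [Finset.sum_insert h, Finset.sum_insert h, psD_add, ih]

lemma DA_add {n : ℕ} (A : Matrix (Fin n) (Fin n) (PowerSeries ℂ)) (v v' : Fin n → PowerSeries ℂ) :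
    DA A (v + v') = DA A v + DA A v' := by
  funext i
  simp only [DA, Pi.add_apply, Matrix.mulVec_add]
  rw [psD_add]
  ring

lemma DA_zero {n : ℕ} (A : Matrix (Fin n) (Fin n) (PowerSeries ℂ)) : DA A 0 = 0 := by
  funext i
  simp [DA, psD_zero]

lemma DA_sum {n : ℕ} (A : Matrix (Fin n) (Fin n) (PowerSeries ℂ)) {ι : Type*} (s : Finset ι)
    (g : ι → (Fin n → PowerSeries ℂ)) :
    DA A (∑ i ∈ s, g i) = ∑ i ∈ s, DA A (g i) := by
  classical
  induction s using Finset.induction with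
  | empty => simp [DA_zero]
  | insert _ _ h ih => rw [Finset.sum_insert h, Finset.sum_insert h, DA_add, ih]

lemma mulVec_DA {n m : ℕ} (A : Matrix (Fin n) (Fin n) (PowerSeries ℂ))
    (A' : Matrix (Fin m) (Fin m) (PowerSeries ℂ)) (F : Matrix (Fin m) (Fin n) (PowerSeries ℂ))
    (hF : (PowerSeries.X ^ 2 : PowerSeries ℂ) • matD F = F * A - A' * F)
    (v : Fin n → PowerSeries ℂ) :
    F.mulVec (DA A v) = DA A' (F.mulVec v) := by
  funext i
  have hFe : ∀ j, (PowerSeries.X : PowerSeries ℂ) ^ 2 * psD (F i j)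
      = (F * A) i j - (A' * F) i j := by
    intro j
    have h := congrFun (congrFun hF i) j
    simpa [matD, smul_eq_mul] using h
  have h1 : F.mulVec (DA A v) i
      = (∑ j, F i j * ((PowerSeries.X : PowerSeries ℂ) ^ 2 * psD (v j)))
        + ((F * A).mulVec v) i := by
    rw [← Matrix.mulVec_mulVec]
    simp only [Matrix.mulVec, dotProduct, DA]
    rw [← Finset.sum_add_distrib]
    exact Finset.sum_congr rfl fun j _ => by ring
  have hps : psD (F.mulVec v i) = ∑ j, (psD (F i j) * v j + F i j * psD (v j)) := by
    simp only [Matrix.mulVec, dotProduct]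
    rw [psD_sum]
    exact Finset.sum_congr rfl fun j _ => psD_mul _ _
  have h2 : DA A' (F.mulVec v) i
      = (∑ j, ((PowerSeries.X : PowerSeries ℂ) ^ 2 * psD (F i j)) * v j)
        + (∑ j, F i j * ((PowerSeries.X : PowerSeries ℂ) ^ 2 * psD (v j)))
        + ((A' * F).mulVec v) i := by
    simp only [DA]
    rw [← Matrix.mulVec_mulVec, hps, Finset.mul_sum]
    have h4 : (∑ j, (PowerSeries.X : PowerSeries ℂ) ^ 2 * (psD (F i j) * v j + F i j * psD (v j)))
        = ∑ j, (((PowerSeries.X : PowerSeries ℂ) ^ 2 * psD (F i j)) * v j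
          + F i j * ((PowerSeries.X : PowerSeries ℂ) ^ 2 * psD (v j))) :=
      Finset.sum_congr rfl fun j _ => by ring
    rw [h4, Finset.sum_add_distrib]
  have h3 : (∑ j, ((PowerSeries.X : PowerSeries ℂ) ^ 2 * psD (F i j)) * v j)
      = ((F * A).mulVec v) i - ((A' * F).mulVec v) i := by
    simp only [Matrix.mulVec, dotProduct, ← Finset.sum_sub_distrib]
    exact Finset.sum_congr rfl fun j _ => by rw [hFe j]; ring
  rw [h1, h2, h3]
  ring

lemma piConst_mulVec {a b : ℕ} (M : Matrix (Fin a) (Fin b) (PowerSeries ℂ))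
    (v : Fin b → PowerSeries ℂ) :
    piConst (M.mulVec v) = (coeffM 0 M).mulVec (piConst v) := by
  funext i
  simp only [piConst, Matrix.mulVec, dotProduct, coeffM, map_sum, _root_.map_mul,
    Matrix.of_apply, ← PowerSeries.coeff_zero_eq_constantCoeff_apply]

lemma piConst_DA {n : ℕ} (A : Matrix (Fin n) (Fin n) (PowerSeries ℂ)) (v : Fin n → PowerSeries ℂ) :
    piConst (DA A v) = (coeffM 0 A).mulVec (piConst v) := by
  have h := piConst_mulVec A v
  funext i
  have : piConst (DA A v) i = piConst (A.mulVec v) i := by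
    simp [piConst, DA, map_add, _root_.map_mul]
  rw [this, h]

lemma coeff_mul_of_vanish {k : ℕ} (f g : PowerSeries ℂ)
    (h : ∀ l < k, PowerSeries.coeff l g = 0) :
    PowerSeries.coeff k (f * g) = PowerSeries.constantCoeff f * PowerSeries.coeff k g := by
  rw [PowerSeries.coeff_mul, Finset.sum_eq_single (0, k)]
  · rw [← PowerSeries.coeff_zero_eq_constantCoeff_apply]
  · rintro ⟨a, b⟩ hab hne
    have hab' : a + b = k := Finset.HasAntidiagonal.mem_antidiagonal.mp hab
    have hb : b < k := by
      rcases Nat.lt_or_ge b k with h' | h'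
      · exact h'
      · exfalso; apply hne
        have : b = k := le_antisymm (by omega) h'
        simp [this, show a = 0 by omega]
    rw [h b hb, mul_zero]
  · intro hne
    exact absurd (Finset.HasAntidiagonal.mem_antidiagonal.mpr (by simp)) hne

def shiftk (k : ℕ) (f : PowerSeries ℂ) : PowerSeries ℂ :=
  PowerSeries.mk fun j => PowerSeries.coeff (j + k) f

lemma X_pow_mul_shiftk (k : ℕ) (f : PowerSeries ℂ)
    (h : ∀ j < k, PowerSeries.coeff j f = 0) :
    (PowerSeries.X : PowerSeries ℂ) ^ k * shiftk k f = f := by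
  ext d
  rw [PowerSeries.coeff_X_pow_mul']
  split_ifs with hd
  · rw [shiftk, PowerSeries.coeff_mk, Nat.sub_add_cancel hd]
  · exact (h d (by omega)).symm

section Proj

variable {N : ℕ} (Em : ℂ → Submodule (PowerSeries ℂ) (Fin N → PowerSeries ℂ))
  [DirectSum.Decomposition Em]

def pr (w : ℂ) (x : Fin N → PowerSeries ℂ) : Fin N → PowerSeries ℂ :=
  (DirectSum.decompose Em x w : Fin N → PowerSeries ℂ)

lemma pr_mem (w : ℂ) (x : Fin N → PowerSeries ℂ) : pr Em w x ∈ Em w :=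
  (DirectSum.decompose Em x w).2

lemma pr_zero (w : ℂ) : pr Em w (0 : Fin N → PowerSeries ℂ) = 0 := by
  simp [pr]

lemma pr_add (w : ℂ) (x y : Fin N → PowerSeries ℂ) :
    pr Em w (x + y) = pr Em w x + pr Em w y := by
  simp only [pr, DirectSum.decompose_add, DirectSum.add_apply, Submodule.coe_add]

lemma pr_smul (w : ℂ) (c : PowerSeries ℂ) (x : Fin N → PowerSeries ℂ) :
    pr Em w (c • x) = c • pr Em w x := by
  simp only [pr, DirectSum.decompose_smul, DirectSum.smul_apply, Submodule.coe_smul]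

lemma pr_sub (w : ℂ) (x y : Fin N → PowerSeries ℂ) :
    pr Em w (x - y) = pr Em w x - pr Em w y := by
  have h := pr_add Em w (x - y) y
  rw [sub_add_cancel] at h
  rw [h]
  abel

lemma pr_sum (w : ℂ) {ι : Type*} (s : Finset ι) (g : ι → (Fin N → PowerSeries ℂ)) :
    pr Em w (∑ i ∈ s, g i) = ∑ i ∈ s, pr Em w (g i) := by
  classical
  induction s using Finset.induction with
  | empty => simp [pr_zero]
  | insert _ _ h ih => rw [Finset.sum_insert h, Finset.sum_insert h, pr_add, ih]

lemma pr_of_mem_same {w : ℂ} {x : Fin N → PowerSeries ℂ} (hx : x ∈ Em w) : pr Em w x = x :=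
  DirectSum.decompose_of_mem_same Em hx

lemma pr_of_mem_ne {w w' : ℂ} {x : Fin N → PowerSeries ℂ} (hx : x ∈ Em w) (hne : w ≠ w') :
    pr Em w' x = 0 :=
  DirectSum.decompose_of_mem_ne Em hx hne

lemma mem_of_pr (x : Fin N → PowerSeries ℂ) (w : ℂ)
    (h : ∀ w' ≠ w, pr Em w' x = 0) : x ∈ Em w := by
  classical
  have hs := DirectSum.sum_support_decompose Em x
  have hsum : (∑ i ∈ (DirectSum.decompose Em x).support,
      ((DirectSum.decompose Em x i : Fin N → PowerSeries ℂ))) = pr Em w x := by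
    apply Finset.sum_eq_single w
    · intro b _ hbw
      exact h b hbw
    · intro hw
      show pr Em w x = _
      simp only [pr, DFinsupp.notMem_support_iff.mp hw, ZeroMemClass.coe_zero]
  rw [← hs, hsum]
  exact pr_mem Em w x

lemma mem_of_X_pow_smul (k : ℕ) (y : Fin N → PowerSeries ℂ) (w : ℂ)
    (h : (PowerSeries.X : PowerSeries ℂ) ^ k • y ∈ Em w) : y ∈ Em w := by
  have h1 : pr Em w ((PowerSeries.X : PowerSeries ℂ) ^ k • y)
      = (PowerSeries.X : PowerSeries ℂ) ^ k • y := pr_of_mem_same Em h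
  rw [pr_smul] at h1
  have h2 : pr Em w y = y := by
    funext i
    have := congrFun h1 i
    simp only [Pi.smul_apply, smul_eq_mul] at this
    exact mul_left_cancel₀ (pow_ne_zero k PowerSeries.X_ne_zero) this
  rw [← h2]
  exact pr_mem Em w y

lemma pr_DA (A : Matrix (Fin N) (Fin N) (PowerSeries ℂ))
    (hinv : ∀ w, ∀ x ∈ Em w, DA A x ∈ Em w) (w : ℂ) (x : Fin N → PowerSeries ℂ) :
    pr Em w (DA A x) = DA A (pr Em w x) := by
  classical
  have hs := DirectSum.sum_support_decompose Em x
  have hDA : DA A x = ∑ i ∈ (DirectSum.decompose Em x).support, DA A (pr Em i x) := by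
    conv_lhs => rw [← hs]
    exact DA_sum A _ _
  rw [hDA, pr_sum,
    Finset.sum_eq_single w (fun b _ hbw => pr_of_mem_ne Em (hinv b _ (pr_mem Em b x)) hbw)
      (fun hw => by
        have hx0 : pr Em w x = 0 := by
          show ((DirectSum.decompose Em x w : Fin N → PowerSeries ℂ)) = 0
          simp only [DFinsupp.notMem_support_iff.mp hw, ZeroMemClass.coe_zero]
        rw [hx0, DA_zero, pr_zero])]
  exact pr_of_mem_same Em (hinv w _ (pr_mem Em w x))

end Proj

lemma exists_sub_smul_eq {N : ℕ} (B : Module.End ℂ (Fin N → ℂ)) {w w' : ℂ} (hne : w' ≠ w)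
    {x : Fin N → ℂ} (hx : x ∈ B.maxGenEigenspace w) :
    ∃ c ∈ B.maxGenEigenspace w, B c - w' • c = x := by
  have hmt : Set.MapsTo (B - algebraMap ℂ (Module.End ℂ (Fin N → ℂ)) w')
      (B.maxGenEigenspace w) (B.maxGenEigenspace w) :=
    Module.End.mapsTo_maxGenEigenspace_of_comm
      ((Commute.refl B).sub_right (Algebra.commute_algebraMap_right w' B)) w
  have hmt2 : Set.MapsTo (B - algebraMap ℂ (Module.End ℂ (Fin N → ℂ)) w)
      (B.maxGenEigenspace w) (B.maxGenEigenspace w) :=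
    Module.End.mapsTo_maxGenEigenspace_of_comm
      ((Commute.refl B).sub_right (Algebra.commute_algebraMap_right w B)) w
  have hnil : IsNilpotent ((B - algebraMap ℂ (Module.End ℂ (Fin N → ℂ)) w).restrict hmt2) :=
    Module.End.isNilpotent_restrict_maxGenEigenspace_sub_algebraMap B w hmt2
  have hdec : (B - algebraMap ℂ (Module.End ℂ (Fin N → ℂ)) w').restrict hmt
      = (B - algebraMap ℂ (Module.End ℂ (Fin N → ℂ)) w).restrict hmt2
        + (w - w') • (1 : Module.End ℂ (B.maxGenEigenspace w)) := by
    apply LinearMap.ext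
    intro z
    apply Subtype.ext
    change (B - algebraMap ℂ (Module.End ℂ (Fin N → ℂ)) w') z
      = (B - algebraMap ℂ (Module.End ℂ (Fin N → ℂ)) w) z
        + (((w - w') • (1 : Module.End ℂ (B.maxGenEigenspace w))) z : Fin N → ℂ)
    simp only [LinearMap.add_apply, LinearMap.smul_apply, Module.End.one_apply,
      Submodule.coe_add, Submodule.coe_smul, LinearMap.restrict_coe_apply,
      LinearMap.sub_apply, Module.algebraMap_end_apply]
    rw [sub_smul]
    abel
  have hunit : IsUnit ((B - algebraMap ℂ (Module.End ℂ (Fin N → ℂ)) w').restrict hmt) := by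
    rw [hdec]
    have h1 : (w - w') • (1 : Module.End ℂ (B.maxGenEigenspace w))
        = algebraMap ℂ (Module.End ℂ (B.maxGenEigenspace w)) (w - w') := by
      apply LinearMap.ext; intro z
      rw [LinearMap.smul_apply, Module.End.one_apply, Module.algebraMap_end_apply]
    have hu : IsUnit ((w - w') • (1 : Module.End ℂ (B.maxGenEigenspace w))) := by
      rw [h1]
      exact RingHom.isUnit_map (algebraMap ℂ (Module.End ℂ (B.maxGenEigenspace w)))
        (isUnit_iff_ne_zero.mpr (sub_ne_zero.mpr (Ne.symm hne)))
    have hcomm : Commute ((B - algebraMap ℂ (Module.End ℂ (Fin N → ℂ)) w).restrict hmt2)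
        ((w - w') • (1 : Module.End ℂ (B.maxGenEigenspace w))) :=
      (Commute.one_right _).smul_right _
    exact IsNilpotent.isUnit_add_right_of_commute
      (R := Module.End ℂ (B.maxGenEigenspace w)) hnil hu hcomm
  obtain ⟨t, ht⟩ := hunit
  set z : B.maxGenEigenspace w := (↑t⁻¹ : Module.End ℂ (B.maxGenEigenspace w)) ⟨x, hx⟩ with hz
  have h1 : ((B - algebraMap ℂ (Module.End ℂ (Fin N → ℂ)) w').restrict hmt) z = ⟨x, hx⟩ := by
    rw [← ht, hz, ← Module.End.mul_apply, Units.mul_inv, Module.End.one_apply]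
  refine ⟨(z : Fin N → ℂ), z.2, ?_⟩
  have h2 := congrArg (Subtype.val) h1
  change (B - algebraMap ℂ (Module.End ℂ (Fin N → ℂ)) w') z = x at h2
  simpa [Module.algebraMap_end_apply] using h2

lemma maxGen_pow_eq_zero {N : ℕ} (B : Module.End ℂ (Fin N → ℂ)) (w : ℂ) {z : Fin N → ℂ}
    (hz : z ∈ B.maxGenEigenspace w) :
    ((B - w • 1) ^ (Module.finrank ℂ (Fin N → ℂ))) z = 0 := by
  rw [Module.End.maxGenEigenspace_eq_genEigenspace_finrank] at hz
  exact Module.End.mem_genEigenspace_nat.mp hz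


lemma piConst_add {n : ℕ} (a b : Fin n → PowerSeries ℂ) :
    piConst (a + b) = piConst a + piConst b := by
  funext i; simp [piConst, map_add]

lemma piConst_sub {n : ℕ} (a b : Fin n → PowerSeries ℂ) :
    piConst (a - b) = piConst a - piConst b := by
  funext i; simp [piConst, map_sub]

lemma piConst_smulC {n : ℕ} (c : ℂ) (a : Fin n → PowerSeries ℂ) :
    piConst ((PowerSeries.C c) • a) = c • piConst a := by
  funext i
  simp [piConst, _root_.map_mul, smul_eq_mul]


/-- Morphisms of E-structures respect the eigenvalue decompositions. -/
theorem morphism_respects_decomposition (n m : ℕ)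
    (A : Matrix (Fin n) (Fin n) (PowerSeries ℂ))
    (A' : Matrix (Fin m) (Fin m) (PowerSeries ℂ))
    (F : Matrix (Fin m) (Fin n) (PowerSeries ℂ))
    (hF : (PowerSeries.X ^ 2 : PowerSeries ℂ) • matD F = F * A - A' * F)
    (E : ℂ → Submodule (PowerSeries ℂ) (Fin n → PowerSeries ℂ))
    (E' : ℂ → Submodule (PowerSeries ℂ) (Fin m → PowerSeries ℂ))
    (hE : IsEigenDecomp A E) (hE' : IsEigenDecomp A' E') :
    ∀ w : ℂ, ∀ v ∈ E w, F.mulVec v ∈ E' w := by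
  classical
  obtain ⟨-, hEint, hEinv, hEpi⟩ := hE
  obtain ⟨-, hE'int, hE'inv, hE'pi⟩ := hE'
  letI dE : DirectSum.Decomposition E := hEint.chooseDecomposition
  letI dE' : DirectSum.Decomposition E' := hE'int.chooseDecomposition
  set B : Module.End ℂ (Fin n → ℂ) := Matrix.mulVecLin (coeffM 0 A) with hBdef
  set B' : Module.End ℂ (Fin m → ℂ) := Matrix.mulVecLin (coeffM 0 A') with hB'def
  intro w v hv
  have key : ∀ w', w' ≠ w → ∀ k : ℕ, ∀ u ∈ E w, ∀ (i : Fin m), ∀ j < k,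
      PowerSeries.coeff j (pr E' w' (F.mulVec u) i) = 0 := by
    intro w' hw' k
    induction k with
    | zero => intro u _ i j hj; exact absurd hj (Nat.not_lt_zero j)
    | succ k ih =>
      set θ : (Fin n → PowerSeries ℂ) → (Fin m → ℂ) :=
        fun u i => PowerSeries.coeff k (pr E' w' (F.mulVec u) i) with hθdef
      suffices hstep : ∀ u ∈ E w, θ u = 0 by
        intro u hu i j hj
        rcases Nat.lt_succ_iff_lt_or_eq.mp hj with hlt | heq
        · exact ih u hu i j hlt
        · subst heq; exact congrFun (hstep u hu) i
      have θadd : ∀ a b : Fin n → PowerSeries ℂ, θ (a + b) = θ a + θ b := by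
        intro a b; funext i
        simp only [hθdef, Matrix.mulVec_add, pr_add, Pi.add_apply, map_add]
      have θsub : ∀ a b : Fin n → PowerSeries ℂ, θ (a - b) = θ a - θ b := by
        intro a b; funext i
        simp only [hθdef, Matrix.mulVec_sub, pr_sub, Pi.sub_apply, map_sub]
      have θsmulC : ∀ (c : ℂ) (a : Fin n → PowerSeries ℂ),
          θ ((PowerSeries.C c) • a) = c • θ a := by
        intro c a; funext i
        simp only [hθdef, Matrix.mulVec_smul, pr_smul, Pi.smul_apply, smul_eq_mul,
          ← PowerSeries.smul_eq_C_mul, PowerSeries.coeff_smul]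
      have hWmem : ∀ u ∈ E w, θ u ∈ B'.maxGenEigenspace w' := by
        intro u hu
        set x : Fin m → PowerSeries ℂ := pr E' w' (F.mulVec u) with hx
        set y : Fin m → PowerSeries ℂ := fun i => shiftk k (x i) with hy
        have hXy : (PowerSeries.X : PowerSeries ℂ) ^ k • y = x := by
          funext i
          simp only [hy, Pi.smul_apply, smul_eq_mul]
          exact X_pow_mul_shiftk k (x i) (fun j hj => ih u hu i j hj)
        have hyE : y ∈ E' w' := mem_of_X_pow_smul E' k y w' (by rw [hXy]; exact pr_mem E' w' _)
        have hθy : θ u = piConst y := by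
          funext i
          simp only [hθdef, piConst, hy, shiftk, ← PowerSeries.coeff_zero_eq_constantCoeff_apply,
            PowerSeries.coeff_mk, zero_add]
          rfl
        have hmem : piConst y ∈ (piConst '' (E' w' : Set (Fin m → PowerSeries ℂ))) :=
          ⟨y, hyE, rfl⟩
        rw [hE'pi w'] at hmem
        rw [hθy]
        exact hmem
      have hθD : ∀ u ∈ E w, θ (DA A u) = B' (θ u) := by
        intro u hu
        have hcomm : pr E' w' (F.mulVec (DA A u)) = DA A' (pr E' w' (F.mulVec u)) := by
          rw [mulVec_DA A A' F hF u, pr_DA E' A' hE'inv w' (F.mulVec u)]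
        funext i
        have h2 : θ (DA A u) i = PowerSeries.coeff k
            ((PowerSeries.X : PowerSeries ℂ) ^ 2 * psD (pr E' w' (F.mulVec u) i))
            + PowerSeries.coeff k (A'.mulVec (pr E' w' (F.mulVec u)) i) := by
          simp only [hθdef, hcomm, DA, map_add]
        have h3 : PowerSeries.coeff k
            ((PowerSeries.X : PowerSeries ℂ) ^ 2 * psD (pr E' w' (F.mulVec u) i)) = 0 := by
          rw [PowerSeries.coeff_X_pow_mul']
          split_ifs with h2k
          · rw [psD, PowerSeries.coeff_mk, ih u hu i (k - 2 + 1) (by omega), mul_zero]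
          · rfl
        have h4 : PowerSeries.coeff k (A'.mulVec (pr E' w' (F.mulVec u)) i)
            = ∑ j, coeffM 0 A' i j * θ u j := by
          simp only [Matrix.mulVec, dotProduct, map_sum]
          refine Finset.sum_congr rfl fun j _ => ?_
          rw [coeff_mul_of_vanish _ _ (fun l hl => ih u hu j l hl),
            ← PowerSeries.coeff_zero_eq_constantCoeff_apply]
          rfl
        rw [h2, h3, h4, zero_add, hB'def]
        simp [Matrix.mulVecLin_apply, Matrix.mulVec, dotProduct]
      have hθX : ∀ u ∈ E w, θ ((PowerSeries.X : PowerSeries ℂ) • u) = 0 := by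
        intro u hu; funext i
        have h1 : pr E' w' (F.mulVec ((PowerSeries.X : PowerSeries ℂ) • u))
            = (PowerSeries.X : PowerSeries ℂ) • pr E' w' (F.mulVec u) := by
          rw [Matrix.mulVec_smul, pr_smul]
        simp only [hθdef, h1, Pi.smul_apply, smul_eq_mul, Pi.zero_apply]
        rw [← pow_one (PowerSeries.X : PowerSeries ℂ), PowerSeries.coeff_X_pow_mul']
        split_ifs with h1k
        · exact ih u hu i (k - 1) (by omega)
        · rfl
      have hQ : ∀ (Nn : ℕ), ∀ u ∈ E w, ∃ z ∈ B'.maxGenEigenspace w',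
          θ u = ((B' - w' • 1) ^ Nn) z := by
        intro Nn
        induction Nn with
        | zero => intro u hu; exact ⟨θ u, hWmem u hu, by simp⟩
        | succ Nn ihN =>
          intro u hu
          have hπu : piConst u ∈ B.maxGenEigenspace w := by
            have : piConst u ∈ (B.maxGenEigenspace w : Set (Fin n → ℂ)) := by
              rw [← hEpi w]; exact ⟨u, hu, rfl⟩
            exact this
          obtain ⟨c, hcW, hc⟩ := exists_sub_smul_eq B hw' hπu
          obtain ⟨v₁, hv₁E, hv₁π⟩ : ∃ v₁ ∈ E w, piConst v₁ = c := by
            have hcmem : c ∈ (piConst '' (E w : Set (Fin n → PowerSeries ℂ))) := by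
              rw [hEpi w]; exact hcW
            obtain ⟨v₁, h1, h2⟩ := hcmem
            exact ⟨v₁, h1, h2⟩
          set v' : Fin n → PowerSeries ℂ := u - DA A v₁ + (PowerSeries.C w') • v₁ with hv'def
          have hv'E : v' ∈ E w :=
            add_mem (sub_mem hu (hEinv w v₁ hv₁E)) (Submodule.smul_mem _ _ hv₁E)
          have hBc : piConst (DA A v₁) = B c := by
            rw [piConst_DA, hv₁π, hBdef, Matrix.mulVecLin_apply]
          have hπv' : piConst v' = 0 := by
            rw [hv'def, piConst_add, piConst_sub, piConst_smulC, hBc, hv₁π, ← hc]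
            abel
          set v₂ : Fin n → PowerSeries ℂ := fun i => shiftk 1 (v' i) with hv₂def
          have hXv₂ : (PowerSeries.X : PowerSeries ℂ) • v₂ = v' := by
            funext i
            simp only [hv₂def, Pi.smul_apply, smul_eq_mul]
            rw [← pow_one (PowerSeries.X : PowerSeries ℂ)]
            refine X_pow_mul_shiftk 1 (v' i) (fun j hj => ?_)
            have hj0 : j = 0 := by omega
            subst hj0
            rw [PowerSeries.coeff_zero_eq_constantCoeff_apply]
            exact congrFun hπv' i
          have hv₂E : v₂ ∈ E w :=
            mem_of_X_pow_smul E 1 v₂ w (by rw [pow_one, hXv₂]; exact hv'E)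
          have hu_eq : u = DA A v₁ - (PowerSeries.C w') • v₁
              + (PowerSeries.X : PowerSeries ℂ) • v₂ := by
            rw [hXv₂, hv'def]; abel
          have hθu : θ u = (B' - w' • 1) (θ v₁) := by
            conv_lhs => rw [hu_eq]
            rw [θadd, θsub, hθD v₁ hv₁E, θsmulC, hθX v₂ hv₂E, add_zero,
              LinearMap.sub_apply, LinearMap.smul_apply, Module.End.one_apply]
          obtain ⟨z, hzW, hz⟩ := ihN v₁ hv₁E
          refine ⟨z, hzW, ?_⟩
          rw [hθu, hz, ← Module.End.mul_apply, ← pow_succ']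
      intro u hu
      obtain ⟨z, hzW, hz⟩ := hQ (Module.finrank ℂ (Fin m → ℂ)) u hu
      rw [hz]
      exact maxGen_pow_eq_zero B' w' hzW
  have hzero : ∀ w' ≠ w, pr E' w' (F.mulVec v) = 0 := by
    intro w' hw'
    funext i
    ext j
    simpa using key w' hw' (j + 1) v hv i j (Nat.lt_succ_self j)
  exact mem_of_pr E' (F.mulVec v) w hzero


end
end

section
/- Let A ∈ M_n(ℂ[[u]]) and A′ ∈ M_m(ℂ[[u]]), and let F ∈ M_{m×n}(ℂ[[u]]) satisfy u²·(dF/du) = F·A − A′·F. If the residues A_0 = A(0) and A′_0 = A′(0) have no eigenvalue in common, then F = 0. -/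
/-!
If `F ∈ M_{m×n}(ℂ[[u]])` is a morphism of E-structures, `u²·dF/du = F·A − A′·F`, and the
residues `A_0`, `A′_0` have no eigenvalue in common, then `F = 0`.
-/

open PowerSeries Matrix

noncomputable section

/-- A complex scalar is in the spectrum of a matrix iff it is a root of the char. polynomial. -/
theorem aux_spec_iff_root (n : ℕ) (C : Matrix (Fin n) (Fin n) ℂ) (r : ℂ) :
    r ∈ spectrum ℂ C ↔ (Matrix.charpoly C).IsRoot r := by
  rw [spectrum.mem_iff, Matrix.charpoly, Polynomial.IsRoot, _root_.eval_det,
    matPolyEquiv_charmatrix]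
  rw [Matrix.isUnit_iff_isUnit_det, isUnit_iff_ne_zero, not_not]
  simp [Polynomial.eval_sub, Algebra.algebraMap_eq_smul_one, Matrix.smul_one_eq_diagonal]

/-- Sylvester: if `G C = B G` and the spectra of `C`, `B` are disjoint, then `G = 0`. -/
theorem aux_sylvester {n m : ℕ} (C : Matrix (Fin n) (Fin n) ℂ) (B : Matrix (Fin m) (Fin m) ℂ)
    (hd : ∀ r : ℂ, ¬(r ∈ spectrum ℂ C ∧ r ∈ spectrum ℂ B))
    (G : Matrix (Fin m) (Fin n) ℂ) (h : G * C = B * G) : G = 0 := by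
  rcases Nat.eq_zero_or_pos n with hn | hn
  · subst hn; ext i j; exact Fin.elim0 j
  rcases Nat.eq_zero_or_pos m with hm | hm
  · subst hm; ext i j; exact Fin.elim0 i
  have hpow : ∀ k : ℕ, G * C ^ k = B ^ k * G := by
    intro k
    induction k with
    | zero => simp
    | succ k ih =>
      rw [pow_succ, ← Matrix.mul_assoc, ih, Matrix.mul_assoc, h, ← Matrix.mul_assoc, ← pow_succ]
  set p := Matrix.charpoly C with hp
  have haev : G * (Polynomial.aeval C p) = (Polynomial.aeval B p) * G := by
    rw [Polynomial.aeval_eq_sum_range, Polynomial.aeval_eq_sum_range,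
      Matrix.mul_sum, Matrix.sum_mul]
    refine Finset.sum_congr rfl fun i _ => ?_
    rw [Matrix.mul_smul, Matrix.smul_mul, hpow]
  rw [Matrix.aeval_self_charpoly, Matrix.mul_zero] at haev
  have hunit : IsUnit (Polynomial.aeval B p) := by
    rw [← spectrum.zero_notMem_iff (R := ℂ)]
    intro h0
    rw [spectrum.map_polynomial_aeval_of_degree_pos B p
      (by rw [hp, Matrix.charpoly_degree_eq_dim]; simpa using hn)] at h0
    obtain ⟨r, hrB, hr0⟩ := h0
    exact hd r ⟨(aux_spec_iff_root n C r).mpr hr0, hrB⟩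
  calc G = (↑hunit.unit⁻¹ : Matrix (Fin m) (Fin m) ℂ) * (Polynomial.aeval B p * G) := by
          rw [← Matrix.mul_assoc, IsUnit.val_inv_mul, Matrix.one_mul]
       _ = 0 := by rw [← haev, Matrix.mul_zero]

/-- A morphism between E-structures whose residues have disjoint spectra vanishes. -/
theorem morphism_eq_zero_of_disjoint_spectra (n m : ℕ)
    (A : Matrix (Fin n) (Fin n) (PowerSeries ℂ))
    (A' : Matrix (Fin m) (Fin m) (PowerSeries ℂ))
    (F : Matrix (Fin m) (Fin n) (PowerSeries ℂ))
    (hF : (PowerSeries.X ^ 2 : PowerSeries ℂ) • matD F = F * A - A' * F)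
    (hdisj : ∀ w : ℂ, ¬ (Module.End.HasEigenvalue (Matrix.mulVecLin (coeffM 0 A)) w ∧
      Module.End.HasEigenvalue (Matrix.mulVecLin (coeffM 0 A')) w)) :
    F = 0 := by
  -- translate the eigenvalue assumption into disjointness of matrix spectra
  have hspecA : ∀ w : ℂ, Module.End.HasEigenvalue (Matrix.mulVecLin (coeffM 0 A)) w ↔
      w ∈ spectrum ℂ (coeffM 0 A) := by
    intro w
    rw [Module.End.hasEigenvalue_iff_mem_spectrum]
    have : Matrix.mulVecLin (coeffM 0 A) = Matrix.toLinAlgEquiv' (coeffM 0 A) := by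
      ext v i
      simp [Matrix.toLinAlgEquiv'_apply, Matrix.mulVecLin_apply]
    rw [this, AlgEquiv.spectrum_eq]
  have hspecA' : ∀ w : ℂ, Module.End.HasEigenvalue (Matrix.mulVecLin (coeffM 0 A')) w ↔
      w ∈ spectrum ℂ (coeffM 0 A') := by
    intro w
    rw [Module.End.hasEigenvalue_iff_mem_spectrum]
    have : Matrix.mulVecLin (coeffM 0 A') = Matrix.toLinAlgEquiv' (coeffM 0 A') := by
      ext v i
      simp [Matrix.toLinAlgEquiv'_apply, Matrix.mulVecLin_apply]
    rw [this, AlgEquiv.spectrum_eq]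
  have hd : ∀ r : ℂ, ¬(r ∈ spectrum ℂ (coeffM 0 A) ∧ r ∈ spectrum ℂ (coeffM 0 A')) := by
    intro r hr
    exact hdisj r ⟨(hspecA r).mpr hr.1, (hspecA' r).mpr hr.2⟩
  -- the key induction: every coefficient matrix of F vanishes
  have key : ∀ k : ℕ, coeffM k F = 0 := by
    intro k
    induction k using Nat.strong_induction_on with
    | _ k IH =>
      -- coefficient k of an entry of F * A, under the induction hypothesis
      have hFA : ∀ (i : Fin m) (j : Fin n),
          PowerSeries.coeff k ((F * A) i j) = (coeffM k F * coeffM 0 A) i j := by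
        intro i j
        rw [Matrix.mul_apply, map_sum, Matrix.mul_apply]
        refine Finset.sum_congr rfl fun l _ => ?_
        rw [PowerSeries.coeff_mul, Finset.sum_eq_single (k, 0)]
        · simp [coeffM]
        · rintro ⟨a, b⟩ hab hne
          rw [Finset.HasAntidiagonal.mem_antidiagonal] at hab
          have ha : a < k := by
            rcases Nat.lt_or_ge a k with h' | h'
            · exact h'
            · exfalso; apply hne
              have hak : a = k := by omega
              have hb0 : b = 0 := by omega
              simp [hak, hb0]
          have h0 : PowerSeries.coeff a (F i l) = 0 := by
            have := congrFun (congrFun (IH a ha) i) l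
            simpa [coeffM] using this
          rw [h0, zero_mul]
        · intro hmem
          exact absurd (Finset.HasAntidiagonal.mem_antidiagonal.mpr (by simp)) hmem
      -- coefficient k of an entry of A' * F, under the induction hypothesis
      have hA'F : ∀ (i : Fin m) (j : Fin n),
          PowerSeries.coeff k ((A' * F) i j) = (coeffM 0 A' * coeffM k F) i j := by
        intro i j
        rw [Matrix.mul_apply, map_sum, Matrix.mul_apply]
        refine Finset.sum_congr rfl fun l _ => ?_
        rw [PowerSeries.coeff_mul, Finset.sum_eq_single (0, k)]
        · simp [coeffM]
        · rintro ⟨a, b⟩ hab hne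
          rw [Finset.HasAntidiagonal.mem_antidiagonal] at hab
          have hb : b < k := by
            rcases Nat.lt_or_ge b k with h' | h'
            · exact h'
            · exfalso; apply hne
              have hbk : b = k := by omega
              have ha0 : a = 0 := by omega
              simp [hbk, ha0]
          have h0 : PowerSeries.coeff b (F l j) = 0 := by
            have := congrFun (congrFun (IH b hb) l) j
            simpa [coeffM] using this
          rw [h0, mul_zero]
        · intro hmem
          exact absurd (Finset.HasAntidiagonal.mem_antidiagonal.mpr (by simp)) hmem
      -- coefficient k of the left-hand side vanishes
      have hLHS : ∀ (i : Fin m) (j : Fin n),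
          PowerSeries.coeff k (((PowerSeries.X ^ 2 : PowerSeries ℂ) • matD F) i j) = 0 := by
        intro i j
        rw [Matrix.smul_apply, smul_eq_mul]
        match k with
        | 0 => simp [PowerSeries.coeff_mul]
        | 1 =>
          rw [PowerSeries.coeff_mul]
          refine Finset.sum_eq_zero ?_
          rintro ⟨a, b⟩ hab
          rw [Finset.HasAntidiagonal.mem_antidiagonal] at hab
          rw [PowerSeries.coeff_X_pow, if_neg (by omega), zero_mul]
        | (d + 2) =>
          rw [show d + 2 = d + 2 from rfl, PowerSeries.coeff_X_pow_mul]
          have h0 : PowerSeries.coeff (d + 1) (F i j) = 0 := by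
            have := congrFun (congrFun (IH (d + 1) (by omega)) i) j
            simpa [coeffM] using this
          simp [matD, psD, h0]
      -- combine into the intertwining relation for the k-th coefficient
      have hcomm : coeffM k F * coeffM 0 A = coeffM 0 A' * coeffM k F := by
        ext i j
        have := congrFun (congrFun hF i) j
        have hc := congrArg (PowerSeries.coeff k) this
        rw [hLHS i j] at hc
        rw [Matrix.sub_apply, map_sub, hFA i j, hA'F i j] at hc
        have := sub_eq_zero.mp hc.symm
        exact this
      exact aux_sylvester (coeffM 0 A) (coeffM 0 A') hd (coeffM k F) hcomm
  -- conclude F = 0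
  ext i j k
  have := congrFun (congrFun (key k) i) j
  simpa [coeffM] using this

end
end

section
/- Let A_0 ∈ M_n(ℂ) with generalized eigenspace decomposition ℂ^n = ⊕_w Ẽ_w, where Ẽ_w is the generalized eigenspace of A_0 for the eigenvalue w. Let W_{A_0} = { φ ∈ End_ℂ(ℂ^n) : π_w ∘ φ|_{Ẽ_w} = 0 for every eigenvalue w }, where π_w : ℂ^n → Ẽ_w is the projection along the other generalized eigenspaces (i.e. W_{A_0} consists of the linear maps whose diagonal blocks with respect to the decomposition vanish). Then the adjoint map ad_{A_0} = [A_0, −] maps W_{A_0} into W_{A_0}, and its restriction ad_{A_0} : W_{A_0} → W_{A_0} is a linear isomorphism. -/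
/-!
For `A_0 ∈ M_n(ℂ)` let `W_{A_0}` be the set of endomorphisms of `ℂ^n` whose diagonal
blocks with respect to the generalized eigenspace decomposition of `A_0` vanish, i.e.
`φ` with `π_w ∘ φ|_{Ẽ_w} = 0` for each eigenvalue `w` — equivalently, `φ` maps each
generalized eigenspace `Ẽ_w` into the sum of the other generalized eigenspaces.
Then `ad_{A_0} = [A_0, −]` maps `W_{A_0}` into itself and restricts to a linear
isomorphism `W_{A_0} → W_{A_0}`.
-/

open Matrix Module

set_option synthInstance.maxHeartbeats 1000000
set_option maxHeartbeats 1000000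

noncomputable section

/-- The commutator with left multiplication by `A_0`. -/
theorem ad_restricts_to_iso_on_offdiagonal_blocks (n : ℕ) (A0 : Matrix (Fin n) (Fin n) ℂ) :
    ∀ W : Set (Module.End ℂ (Fin n → ℂ)),
      W = {φ : Module.End ℂ (Fin n → ℂ) |
        ∀ w : ℂ, ∀ x ∈ Module.End.maxGenEigenspace (Matrix.mulVecLin A0) w,
          φ x ∈ ⨆ w' : ℂ, ⨆ _ : w' ≠ w,
            Module.End.maxGenEigenspace (Matrix.mulVecLin A0) w'} →
      Set.MapsTo (fun φ : Module.End ℂ (Fin n → ℂ) =>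
          Matrix.mulVecLin A0 ∘ₗ φ - φ ∘ₗ Matrix.mulVecLin A0) W W ∧
      Set.BijOn (fun φ : Module.End ℂ (Fin n → ℂ) =>
          Matrix.mulVecLin A0 ∘ₗ φ - φ ∘ₗ Matrix.mulVecLin A0) W W := by
  intro W hW
  set A : Module.End ℂ (Fin n → ℂ) := Matrix.mulVecLin A0 with hA
  set E : ℂ → Submodule ℂ (Fin n → ℂ) := A.maxGenEigenspace with hE
  set S : ℂ → Submodule ℂ (Fin n → ℂ) := fun w => ⨆ w' : ℂ, ⨆ _ : w' ≠ w, E w' with hS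
  have hWmem : ∀ φ : Module.End ℂ (Fin n → ℂ),
      φ ∈ W ↔ ∀ w : ℂ, ∀ x ∈ E w, φ x ∈ S w := by
    intro φ; rw [hW]; rfl
  -- A maps each S w into itself
  have hAS : ∀ w, ∀ y ∈ S w, A y ∈ S w := by
    intro w
    have hle : Submodule.map A (S w) ≤ S w := by
      rw [hS]
      simp only [Submodule.map_iSup]
      refine iSup_le fun w' => iSup_le fun hne => ?_
      refine le_trans ?_ (le_iSup_of_le w' (le_iSup_of_le hne le_rfl))
      rintro y ⟨x, hx, rfl⟩
      exact Module.End.mapsTo_maxGenEigenspace_of_comm rfl w' hx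
    intro y hy
    exact hle ⟨y, hy, rfl⟩
  -- MapsTo
  have hmaps : Set.MapsTo (fun φ : Module.End ℂ (Fin n → ℂ) => A ∘ₗ φ - φ ∘ₗ A) W W := by
    intro φ hφ
    rw [hWmem] at hφ ⊢
    intro w x hx
    have h1 : φ x ∈ S w := hφ w x hx
    have h2 : A x ∈ E w := Module.End.mapsTo_maxGenEigenspace_of_comm rfl w hx
    have h3 : φ (A x) ∈ S w := hφ w _ h2
    have h4 : A (φ x) ∈ S w := hAS w _ h1
    simpa using sub_mem h4 h3
  -- W as a submodule
  let W' : Submodule ℂ (Module.End ℂ (Fin n → ℂ)) :=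
    { carrier := W
      add_mem' := by
        intro a b ha hb
        rw [hWmem] at ha hb ⊢
        intro w x hx
        simpa using add_mem (ha w x hx) (hb w x hx)
      zero_mem' := by
        rw [hWmem]; intro w x hx; simp
      smul_mem' := by
        intro c a ha
        rw [hWmem] at ha ⊢
        intro w x hx
        simpa using Submodule.smul_mem _ c (ha w x hx) }
  -- the ad map as a linear endomorphism
  let f : Module.End ℂ (Module.End ℂ (Fin n → ℂ)) :=
    LinearMap.mulLeft ℂ A - LinearMap.mulRight ℂ A
  have hf : ∀ φ : Module.End ℂ (Fin n → ℂ), f φ = A ∘ₗ φ - φ ∘ₗ A := fun φ => rfl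
  -- injectivity ingredient
  have hker : ∀ φ ∈ W, A ∘ₗ φ - φ ∘ₗ A = 0 → φ = 0 := by
    intro φ hφ h0
    have hc : Commute A φ := by
      have := sub_eq_zero.mp h0
      exact this
    have hφE : ∀ w, Set.MapsTo φ (E w) (E w) := fun w =>
      Module.End.mapsTo_maxGenEigenspace_of_comm hc w
    rw [hWmem] at hφ
    have hEker : ∀ w, E w ≤ LinearMap.ker φ := by
      intro w x hx
      have h1 : φ x ∈ E w := hφE w hx
      have h2 : φ x ∈ S w := hφ w x hx
      have hdisj := A.independent_maxGenEigenspace w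
      have : φ x ∈ (⊥ : Submodule ℂ (Fin n → ℂ)) :=
        hdisj.le_bot ⟨h1, h2⟩
      simpa [LinearMap.mem_ker] using this
    have htop : (⨆ w, E w) = ⊤ := Module.End.iSup_maxGenEigenspace_eq_top A
    have : (⊤ : Submodule ℂ (Fin n → ℂ)) ≤ LinearMap.ker φ := by
      rw [← htop]; exact iSup_le hEker
    refine LinearMap.ext fun x => ?_
    have hx : φ x = 0 := this (Submodule.mem_top (x := x))
    simpa using hx
  -- restricted map on W'
  have hfmaps : ∀ φ ∈ W', f φ ∈ W' := fun φ hφ => hmaps hφ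
  let g : W' →ₗ[ℂ] W' := f.restrict hfmaps
  have hginj : Function.Injective g := by
    rintro ⟨a, ha⟩ ⟨b, hb⟩ hab
    have h1 : f a = f b := congrArg Subtype.val hab
    have h0 : f (a - b) = 0 := by rw [map_sub, h1, sub_self]
    exact Subtype.ext (sub_eq_zero.mp (hker (a - b) (W'.sub_mem ha hb) h0))
  have hgsurj : Function.Surjective g :=
    (@LinearMap.injective_iff_surjective ℂ W' _ _ _ (FiniteDimensional.finiteDimensional_submodule W') g).mp hginj
  refine ⟨hmaps, hmaps, ?_, ?_⟩
  · -- InjOn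
    intro φ hφ ψ hψ hfeq
    have hsub : φ - ψ ∈ W' := W'.sub_mem hφ hψ
    have h1 : f φ = f ψ := hfeq
    have h0 : f (φ - ψ) = 0 := by rw [map_sub, h1, sub_self]
    exact sub_eq_zero.mp (hker (φ - ψ) hsub h0)
  · -- SurjOn
    intro ψ hψ
    obtain ⟨⟨φ, hφ⟩, hgφ⟩ := hgsurj ⟨ψ, hψ⟩
    refine ⟨φ, hφ, ?_⟩
    exact congrArg Subtype.val hgφ

end
end

section
/- Let A = ∑_{i≥0} A_i u^i ∈ M_n(ℂ[[u]]) with diagonal residue A_0 = diag(w_1, …, w_n), and suppose that the entry (A_1)_{jk} = 0 whenever w_j = w_k. Then there exist v_1, …, v_n ∈ ℂ[[u]]^n with constant terms v_j(0) = e_j (the j-th standard basis vector) such that u²·(dv_j/du) + A·v_j = w_j·v_j for every j; equivalently, there exists P ∈ GL_n(ℂ[[u]]) with P(0) = Id and P^{-1}AP + u²P^{-1}(dP/du) = A_0. (Existence of a basis of w-flat sections: a semi-simple residue together with vanishing diagonal blocks of A_1 forces the E-structure to be isomorphic to a direct sum of one-dimensional E-structures E^{-w/u}.) -/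
/-!
Existence of a basis of w-flat sections: if the residue `A_0 = diag(w_1, …, w_n)` is
diagonal and the diagonal blocks of `A_1` vanish (`(A_1)_{jk} = 0` whenever
`w_j = w_k`), then there are sections `v_j ∈ ℂ[[u]]^n` with `v_j(0) = e_j` and
`u²·dv_j/du + A·v_j = w_j·v_j`; equivalently there is a gauge transformation
`P ∈ GL_n(ℂ[[u]])` with `P(0) = Id` and `P⁻¹AP + u²P⁻¹(dP/du) = A_0`, i.e. the
E-structure is isomorphic to `⊕_j E^{-w_j/u}`.
-/

open PowerSeries Matrix

noncomputable section

namespace FlatAux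

variable {n : ℕ}


variable {n : ℕ}

noncomputable def offF (a : ℕ → Matrix (Fin n) (Fin n) ℂ) (w : Fin n → ℂ) (j : Fin n)
    (prev : ℕ → Fin n → ℂ) (m : ℕ) (k : Fin n) : ℂ :=
  if w k = w j then 0
  else ((m : ℂ) * prev m k
      + ∑ i ∈ Finset.range (m + 1), (a (i + 1)).mulVec (prev (m - i)) k) / (w j - w k)

noncomputable def cv (a : ℕ → Matrix (Fin n) (Fin n) ℂ) (w : Fin n → ℂ) (j : Fin n) :
    ℕ → Fin n → ℂ
  | 0 => Pi.single j 1
  | (m + 1) => fun k =>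
      if w k = w j then
        -(((a 1).mulVec (offF a w j (fun i => if h : i < m + 1 then cv a w j i else 0) m) k
            + ∑ t ∈ Finset.range (m + 1),
                (a (t + 2)).mulVec
                  ((fun i => if h : i < m + 1 then cv a w j i else 0) (m - t)) k)
          / ((m : ℂ) + 1))
      else offF a w j (fun i => if h : i < m + 1 then cv a w j i else 0) m k
  decreasing_by all_goals exact h

lemma cv_zero (a : ℕ → Matrix (Fin n) (Fin n) ℂ) (w : Fin n → ℂ) (j : Fin n) :
    cv a w j 0 = Pi.single j 1 := by rw [cv]

lemma offF_ext (a : ℕ → Matrix (Fin n) (Fin n) ℂ) (w : Fin n → ℂ) (j : Fin n)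
    {p q : ℕ → Fin n → ℂ} (m : ℕ) (h : ∀ i ≤ m, p i = q i) (k : Fin n) :
    offF a w j p m k = offF a w j q m k := by
  have hm : p m = q m := h m le_rfl
  have hs : (∑ i ∈ Finset.range (m + 1), (a (i + 1)).mulVec (p (m - i)) k)
      = ∑ i ∈ Finset.range (m + 1), (a (i + 1)).mulVec (q (m - i)) k :=
    Finset.sum_congr rfl fun i _ => by rw [h (m - i) (Nat.sub_le _ _)]
  unfold offF
  rw [hm, hs]

lemma cv_succ (a : ℕ → Matrix (Fin n) (Fin n) ℂ) (w : Fin n → ℂ) (j : Fin n) (m : ℕ)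
    (k : Fin n) :
    cv a w j (m + 1) k =
      if w k = w j then
        -(((a 1).mulVec (offF a w j (cv a w j) m) k
            + ∑ t ∈ Finset.range (m + 1), (a (t + 2)).mulVec (cv a w j (m - t)) k)
          / ((m : ℂ) + 1))
      else offF a w j (cv a w j) m k := by
  have hp : ∀ i ≤ m, (fun i => if h : i < m + 1 then cv a w j i else 0) i = cv a w j i :=
    fun i hi => dif_pos (Nat.lt_succ_of_le hi)
  have ho : offF a w j (fun i => if h : i < m + 1 then cv a w j i else 0) m
      = offF a w j (cv a w j) m := funext fun k => offF_ext a w j m hp k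
  have hs : (∑ t ∈ Finset.range (m + 1),
        (a (t + 2)).mulVec ((fun i => if h : i < m + 1 then cv a w j i else 0) (m - t)) k)
      = ∑ t ∈ Finset.range (m + 1), (a (t + 2)).mulVec (cv a w j (m - t)) k :=
    Finset.sum_congr rfl fun t _ => by rw [hp (m - t) (Nat.sub_le _ _)]
  simp only [cv]
  rw [ho, hs]

lemma cv_rec (a : ℕ → Matrix (Fin n) (Fin n) ℂ) (w : Fin n → ℂ) (j : Fin n)
    (h1 : ∀ k l : Fin n, w k = w l → a 1 k l = 0) (m : ℕ) (k : Fin n) :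
    (w k - w j) * cv a w j (m + 1) k + (m : ℂ) * cv a w j m k
      + ∑ i ∈ Finset.range (m + 1), (a (i + 1)).mulVec (cv a w j (m - i)) k = 0 := by
  by_cases hk : w k = w j
  · rw [hk, sub_self, zero_mul, zero_add]
    cases m with
    | zero =>
      simp only [Nat.cast_zero, zero_mul, zero_add, Finset.range_one, Finset.sum_singleton,
        Nat.sub_zero]
      rw [cv_zero, Matrix.mulVec_single]
      show a 1 k j * 1 = 0
      rw [h1 k j hk, zero_mul]
    | succ m' =>
      have hm : ((m' : ℂ) + 1) ≠ 0 := Nat.cast_add_one_ne_zero m'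
      have hterm : (a 1).mulVec (cv a w j (m' + 1)) k
          = (a 1).mulVec (offF a w j (cv a w j) m') k := by
        simp only [Matrix.mulVec, dotProduct]
        refine Finset.sum_congr rfl fun l _ => ?_
        by_cases hl : w l = w j
        · rw [h1 k l (hk.trans hl.symm), zero_mul, zero_mul]
        · rw [cv_succ, if_neg hl]
      have hsplit : (∑ i ∈ Finset.range (m' + 1 + 1),
            (a (i + 1)).mulVec (cv a w j (m' + 1 - i)) k)
          = (∑ i ∈ Finset.range (m' + 1), (a (i + 2)).mulVec (cv a w j (m' - i)) k)
            + (a 1).mulVec (cv a w j (m' + 1)) k := by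
        rw [Finset.sum_range_succ']
        congr 1
        refine Finset.sum_congr rfl fun i _ => ?_
        have h2 : m' + 1 - (i + 1) = m' - i := by omega
        rw [h2]
      rw [cv_succ, if_pos hk, hsplit, hterm]
      push_cast
      field_simp
      ring
  · rw [cv_succ, if_neg hk, offF, if_neg hk]
    have hw : w j - w k ≠ 0 := sub_ne_zero.2 fun h => hk h.symm
    field_simp
    ring


lemma coeff_X2_psD (f : PowerSeries ℂ) (M : ℕ) :
    PowerSeries.coeff (M + 1) (PowerSeries.X ^ 2 * psD f)
      = (M : ℂ) * PowerSeries.coeff M f := by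
  cases M with
  | zero =>
    rw [PowerSeries.coeff_X_pow_mul']
    norm_num
  | succ M' =>
    rw [show M' + 1 + 1 = M' + 2 from rfl, PowerSeries.coeff_X_pow_mul, psD, coeff_mk]
    push_cast
    ring

lemma coeff_zero_X2_psD (f : PowerSeries ℂ) :
    PowerSeries.coeff 0 (PowerSeries.X ^ 2 * psD f) = 0 := by
  rw [PowerSeries.coeff_X_pow_mul']
  norm_num

end FlatAux

/-- Existence of a basis of `w`-flat sections for a semi-simple residue with vanishing
diagonal blocks of `A_1`. -/
theorem flat_basis_of_semisimple_residue (n : ℕ)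
    (A : Matrix (Fin n) (Fin n) (PowerSeries ℂ)) (w : Fin n → ℂ)
    (h0 : coeffM 0 A = Matrix.diagonal w)
    (h1 : ∀ j k : Fin n, w j = w k → coeffM 1 A j k = 0) :
    (∃ v : Fin n → (Fin n → PowerSeries ℂ),
      (∀ j, piConst (v j) = Pi.single j 1) ∧
      (∀ j, DA A (v j) = fun i => PowerSeries.C (w j) * v j i)) ∧
    (∃ P : Matrix (Fin n) (Fin n) (PowerSeries ℂ),
      IsUnit P ∧ coeffM 0 P = 1 ∧
      -- `P⁻¹AP + u²P⁻¹(dP/du) = A_0`, equivalently `A·P + u²·dP/du = P·A_0`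
      A * P + (PowerSeries.X ^ 2 : PowerSeries ℂ) • matD P =
        P * (Matrix.diagonal w).map (PowerSeries.C (R := ℂ))) := by
  classical
  set a : ℕ → Matrix (Fin n) (Fin n) ℂ := fun i => coeffM i A with ha
  have ha0 : a 0 = Matrix.diagonal w := h0
  have ha1 : ∀ k l : Fin n, w k = w l → a 1 k l = 0 := fun k l h => h1 k l h
  set v : Fin n → Fin n → PowerSeries ℂ :=
    fun j i => PowerSeries.mk fun M => FlatAux.cv a w j M i with hv
  have hvc : ∀ (j i : Fin n) (M : ℕ),
      PowerSeries.coeff M (v j i) = FlatAux.cv a w j M i :=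
    fun j i M => PowerSeries.coeff_mk M _
  have hcoeff_mulVec : ∀ (j i : Fin n) (M : ℕ),
      PowerSeries.coeff M (A.mulVec (v j) i)
        = ∑ p ∈ Finset.range (M + 1), (a p).mulVec (FlatAux.cv a w j (M - p)) i := by
    intro j i M
    have e1 : A.mulVec (v j) i = ∑ l, A i l * v j l := rfl
    rw [e1, map_sum]
    have e2 : ∀ l, PowerSeries.coeff M (A i l * v j l)
        = ∑ p ∈ Finset.range (M + 1), a p i l * FlatAux.cv a w j (M - p) l := by
      intro l
      rw [PowerSeries.coeff_mul, Finset.Nat.sum_antidiagonal_eq_sum_range_succ_mk]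
      exact Finset.sum_congr rfl fun p _ => by rw [hvc]; rfl
    rw [Finset.sum_congr rfl fun l _ => e2 l, Finset.sum_comm]
    exact Finset.sum_congr rfl fun p _ => by simp [Matrix.mulVec, dotProduct]
  have hflat : ∀ j, DA A (v j) = fun i => PowerSeries.C (w j) * v j i := by
    intro j
    funext i
    have e0 : DA A (v j) i = PowerSeries.X ^ 2 * psD (v j i) + A.mulVec (v j) i := rfl
    rw [e0]
    ext M
    rw [map_add, PowerSeries.coeff_C_mul, hcoeff_mulVec j i M, hvc j i M]
    cases M with
    | zero =>
      rw [FlatAux.coeff_zero_X2_psD, zero_add]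
      simp only [zero_add, Finset.range_one, Finset.sum_singleton, Nat.sub_zero]
      rw [ha0, FlatAux.cv_zero, Matrix.diagonal_mulVec_single]
      simp [Pi.single_apply]
    | succ M =>
      rw [FlatAux.coeff_X2_psD, hvc j i M]
      have hsplit : (∑ p ∈ Finset.range (M + 1 + 1),
            (a p).mulVec (FlatAux.cv a w j (M + 1 - p)) i)
          = (∑ p ∈ Finset.range (M + 1), (a (p + 1)).mulVec (FlatAux.cv a w j (M - p)) i)
            + w i * FlatAux.cv a w j (M + 1) i := by
        rw [Finset.sum_range_succ']
        congr 1
        · refine Finset.sum_congr rfl fun p _ => ?_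
          have h2 : M + 1 - (p + 1) = M - p := by omega
          rw [h2]
        · rw [Nat.sub_zero, ha0, Matrix.mulVec_diagonal]
      rw [hsplit]
      linear_combination FlatAux.cv_rec a w j ha1 M i
  have hconst : ∀ j, piConst (v j) = Pi.single j 1 := by
    intro j
    funext i
    rw [piConst, hv]
    simp only [← PowerSeries.coeff_zero_eq_constantCoeff_apply, coeff_mk]
    rw [FlatAux.cv_zero]
  refine ⟨⟨v, hconst, hflat⟩, ?_⟩
  set P : Matrix (Fin n) (Fin n) (PowerSeries ℂ) := Matrix.of fun i j => v j i with hP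
  have hP0 : coeffM 0 P = 1 := by
    ext i j
    show PowerSeries.coeff 0 (P i j) = (1 : Matrix (Fin n) (Fin n) ℂ) i j
    rw [show P i j = v j i from rfl, hvc]
    rw [FlatAux.cv_zero]
    simp [Pi.single_apply, Matrix.one_apply]
  have hPunit : IsUnit P := by
    have hc : coeffM 0 P = P.map (PowerSeries.constantCoeff) := by
      ext i j
      simp [coeffM, Matrix.map_apply, PowerSeries.coeff_zero_eq_constantCoeff]
    have hdet : PowerSeries.constantCoeff P.det = 1 := by
      rw [RingHom.map_det, RingHom.mapMatrix_apply, ← hc, hP0, Matrix.det_one]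
    refine (Matrix.isUnit_iff_isUnit_det P).2 ?_
    rw [PowerSeries.isUnit_iff_constantCoeff, hdet]
    exact isUnit_one
  refine ⟨P, hPunit, hP0, ?_⟩
  refine Matrix.ext fun i j => ?_
  have hDA := congrFun (hflat j) i
  simp only [DA] at hDA
  have eAP : (A * P) i j = A.mulVec (v j) i := by
    rw [Matrix.mul_apply]
    rfl
  have eRHS : (P * (Matrix.diagonal w).map (PowerSeries.C (R := ℂ))) i j
      = PowerSeries.C (w j) * v j i := by
    rw [Matrix.diagonal_map (map_zero _), Matrix.mul_diagonal]
    exact mul_comm _ _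
  rw [Matrix.add_apply, Matrix.smul_apply, eAP, eRHS, smul_eq_mul]
  have ematD : matD P i j = psD (v j i) := rfl
  rw [ematD]
  linear_combination hDA


end
end

section
/- Let W = diag(w_1, …, w_n) ∈ M_n(ℂ) and W′ = diag(w′_1, …, w′_m) ∈ M_m(ℂ) be constant diagonal matrices, and let F ∈ M_{m×n}(ℂ[[u]]) satisfy u²·(dF/du) = F·W − W′·F. Then F is constant, i.e. F = F_0 ∈ M_{m×n}(ℂ), and F_0·W = W′·F_0. In particular, every morphism (and every automorphism) between direct sums of one-dimensional E-structures ⊕_j E^{-w_j/u} → ⊕_i E^{-w′_i/u} is independent of u. -/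
/-!
Every morphism between direct sums of one-dimensional E-structures `E^{-w/u}` is
independent of `u`: if `W = diag(w_1,…,w_n)`, `W′ = diag(w′_1,…,w′_m)` are constant
diagonal matrices and `F ∈ M_{m×n}(ℂ[[u]])` satisfies `u²·dF/du = F·W − W′·F`, then
`F` is a constant matrix `F_0 ∈ M_{m×n}(ℂ)` and `F_0·W = W′·F_0`.
-/

open PowerSeries Matrix

noncomputable section

private lemma key (c : ℂ) (f : PowerSeries ℂ)
    (h : (X ^ 2 : PowerSeries ℂ) * psD f = C c * f) :
    f = C (coeff 0 f) ∧ c * coeff 0 f = 0 := by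
  have h0 : c * coeff 0 f = 0 := by
    have := congrArg (coeff 0) h
    rw [pow_two, mul_assoc] at this
    simpa using this.symm
  have hk : ∀ k : ℕ, 1 ≤ k → coeff k f = 0 := by
    by_cases hc : c = 0
    · subst hc
      have hps : psD f = 0 := by simpa using h
      intro k hk
      obtain ⟨j, rfl⟩ := Nat.exists_eq_add_of_le hk
      have := congrArg (coeff j) hps
      simp only [psD, coeff_mk, map_zero] at this
      have hne : ((j : ℂ) + 1) ≠ 0 := Nat.cast_add_one_ne_zero j
      have := mul_eq_zero.mp this
      rcases this with h' | h'
      · exact absurd h' hne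
      · rw [add_comm]; exact h'
    · have main : ∀ k : ℕ, coeff k f = 0 := by
        intro k
        induction k using Nat.strong_induction_on with
        | _ k ih =>
          have hc' := congrArg (coeff k) h
          rw [coeff_C_mul] at hc'
          match k with
          | 0 => exact (mul_eq_zero.mp (h0)).resolve_left hc
          | 1 =>
            rw [pow_two, mul_assoc] at hc'
            simp [coeff_succ_X_mul, coeff_zero_X_mul] at hc'
            exact hc'.resolve_left hc
          | (j+2) =>
            rw [coeff_X_pow_mul (psD f) 2 j] at hc'
            simp only [psD, coeff_mk] at hc'
            rw [ih (j+1) (by omega)] at hc'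
            rw [mul_zero] at hc'
            exact (mul_eq_zero.mp hc'.symm).resolve_left hc
      intro k _; exact main k
  constructor
  · ext k
    match k with
    | 0 => simp
    | (j+1) => rw [hk (j+1) (by omega)]; simp
  · exact h0

/-- Morphisms between direct sums of one-dimensional E-structures are constant. -/
theorem morphism_between_sums_of_one_dim_E_structures_is_constant (n m : ℕ)
    (w : Fin n → ℂ) (w' : Fin m → ℂ)
    (F : Matrix (Fin m) (Fin n) (PowerSeries ℂ))
    (hF : (PowerSeries.X ^ 2 : PowerSeries ℂ) • matD F =
      F * (Matrix.diagonal w).map (PowerSeries.C : ℂ →+* PowerSeries ℂ) -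
        (Matrix.diagonal w').map (PowerSeries.C : ℂ →+* PowerSeries ℂ) * F) :
    ∃ F0 : Matrix (Fin m) (Fin n) ℂ,
      F = F0.map (PowerSeries.C : ℂ →+* PowerSeries ℂ) ∧
      F0 * Matrix.diagonal w = Matrix.diagonal w' * F0 := by
  have entry : ∀ i j, (X ^ 2 : PowerSeries ℂ) * psD (F i j) =
      C (w j - w' i) * F i j := by
    intro i j
    have h := congrFun (congrFun hF i) j
    rw [Matrix.diagonal_map (map_zero _), Matrix.diagonal_map (map_zero _)] at h
    simp only [Matrix.smul_apply, Matrix.sub_apply, Matrix.mul_diagonal,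
      Matrix.diagonal_mul, smul_eq_mul, Function.comp_apply, matD, Matrix.of_apply] at h
    rw [h, map_sub]
    ring
  have keyij := fun i j => key (w j - w' i) (F i j) (entry i j)
  refine ⟨Matrix.of fun i j => coeff 0 (F i j), ?_, ?_⟩
  · ext i j
    exact (keyij i j).1 ▸ rfl
  · ext i j
    have h2 := (keyij i j).2
    simp only [Matrix.mul_diagonal, Matrix.diagonal_mul, Matrix.of_apply]
    rw [sub_mul] at h2
    linear_combination h2

end
end

section
/- For a finite list of integers b = (b_1, …, b_r), define ζ(b) = 1 + ∑_{i=1}^{r} i·b_i. Let k = k_1 + k_2 + k_3 + k_4 + k_5 with k_1, …, k_5 ≥ 0, let a_1, …, a_k ∈ ℤ, and for s = 1, …, 5 let block s denote the sublist of consecutive entries (a_{k_1+⋯+k_{s−1}+1}, …, a_{k_1+⋯+k_s}) with sum ε_s. Let g_2, g_3 ∈ ℤ, and set q_2 = ε_2 + g_2 + 1 and q_4 = ε_4 + g_3 + 1. Then ζ(block 2) + ζ(block 4) + ζ(block 1 ⧺ (q_2) ⧺ block 3 ⧺ (q_4) ⧺ block 5) ≡ ζ(a) + ε_2 + ε_3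 + k_3 + g_2·(k_1 + 1) + g_3·(k_1 + k_3) + 1 + k_2·(ε_3 + ε_4 + ε_5) + k_4·ε_5 (mod 2), where ⧺ denotes concatenation of lists and (q) denotes a one-element list. (Sign identity for the ζ-signs appearing in the structure equation of the horocyclic q-operations: a_i plays the role of the reduced degree |α_i|′ and g_2, g_3 the roles of |γ^{J_2}|, |γ^{J_3}|, so that q_2 and q_4 are the reduced degrees of the outputs of the inner q-operations by the degree property.) -/
/-!
Sign identity for the ζ-signs appearing in the structure equation of the horocyclic
q-operations.  For a list `b = (b_1, …, b_r)` of integers, `ζ(b) = 1 + ∑_{i=1}^r i·b_i`.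
A list `a = (a_1, …, a_k)` split into five consecutive blocks `b_1, …, b_5` of sizes
`k_1, …, k_5` with block sums `ε_1, …, ε_5` (the `a_i` play the role of the reduced
degrees `|α_i|′`), and `g_2, g_3` play the roles of `|γ^{J_2}|`, `|γ^{J_3}|`, so that
`q_2 = ε_2 + g_2 + 1` and `q_4 = ε_4 + g_3 + 1` are the reduced degrees of the outputs
of the inner q-operations.  Then
`ζ(b₂) + ζ(b₄) + ζ(b₁ ⧺ (q₂) ⧺ b₃ ⧺ (q₄) ⧺ b₅)
  ≡ ζ(a) + ε₂ + ε₃ + k₃ + g₂(k₁+1) + g₃(k₁+k₃) + 1 + k₂(ε₃+ε₄+ε₅) + k₄·ε₅ (mod 2)`.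
-/

open Finset

/-- `ζ(b_1, …, b_r) = 1 + ∑_{i=1}^r i·b_i`. -/
def zetaL (l : List ℤ) : ℤ :=
  1 + ∑ i : Fin l.length, ((i : ℕ) + 1 : ℤ) * l.get i

def Wl (l : List ℤ) : ℤ := ∑ i : Fin l.length, ((i : ℕ) + 1 : ℤ) * l.get i

lemma zetaL_eq (l : List ℤ) : zetaL l = 1 + Wl l := rfl

lemma Wl_cons (a : ℤ) (l : List ℤ) : Wl (a :: l) = a + Wl l + l.sum := by
  simp only [Wl, List.length_cons, Fin.sum_univ_succ, Fin.val_zero, Nat.cast_zero,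
    List.get_cons_zero, Fin.val_succ, Nat.cast_add, Nat.cast_one]
  simp only [show ∀ i : Fin l.length, (a :: l).get i.succ = l.get i from fun i => rfl]
  rw [Finset.sum_congr rfl (fun (i : Fin l.length) _ =>
    show ((i:ℕ) + 1 + 1 : ℤ) * l.get i = ((i:ℕ)+1:ℤ) * l.get i + l.get i by ring),
    Finset.sum_add_distrib]
  have hs : ∑ i : Fin l.length, l.get i = l.sum := by
    simpa using (List.sum_eq_sum_getElem l).symm
  rw [hs]; ring

lemma Wl_append (l m : List ℤ) :
    Wl (l ++ m) = Wl l + Wl m + (l.length : ℤ) * m.sum := by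
  induction l with
  | nil => simp [Wl]
  | cons a t ih =>
      rw [List.cons_append, Wl_cons, ih, Wl_cons, List.sum_append]
      push_cast [List.length_cons]
      ring

lemma Wl_singleton (x : ℤ) : Wl [x] = x := by simp [Wl]

/-- Sign identity for the ζ-signs in the structure equation for the horocyclic
q-operations. -/
theorem zeta_sign_identity (b1 b2 b3 b4 b5 : List ℤ) (g2 g3 : ℤ) :
    Int.ModEq 2
      (zetaL b2 + zetaL b4 +
        zetaL (b1 ++ [b2.sum + g2 + 1] ++ b3 ++ [b4.sum + g3 + 1] ++ b5))
      (zetaL (b1 ++ b2 ++ b3 ++ b4 ++ b5) + b2.sum + b3.sum + (b3.length : ℤ) +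
        g2 * ((b1.length : ℤ) + 1) + g3 * ((b1.length : ℤ) + (b3.length : ℤ)) + 1 +
        (b2.length : ℤ) * (b3.sum + b4.sum + b5.sum) + (b4.length : ℤ) * b5.sum) := by
  rw [Int.modEq_iff_dvd]
  refine ⟨-(2 + (b1.length:ℤ) + b4.sum + g3 + b5.sum) + (b2.length:ℤ) * (b3.sum + b4.sum + b5.sum) + (b4.length:ℤ) * b5.sum, ?_⟩
  simp only [zetaL_eq, Wl_append, Wl_singleton, List.sum_append, List.sum_cons,
    List.sum_nil, List.length_append, List.length_singleton, Nat.cast_add, Nat.cast_one]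
  ring
end
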